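/- arXiv:0810.5083 — 11 statements merged into one kernel-verified Lean document; each statement's English description precedes it below -/
import Mathlib

section
/- For integers k, ℓ ≥ 0, let a_{k,ℓ} = Σ_{j=0}^{p^n-1} C(j,k)·C(j,ℓ) computed in F_p. Then a_{k,ℓ} = 0 if k + ℓ ≤ p^n - 2, and a_{k,ℓ} = (-1)^k if k + ℓ = p^n - 1. -/
open Finset

lemma hockey (N t : ℕ) : ∑ j ∈ Finset.range N, j.choose t = N.choose (t + 1) := by
  induction N with
  | zero => simp
  | succ N ih => rw [Finset.sum_range_succ, ih, Nat.choose_succ_succ']; omega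

lemma prod_id (j k ℓ : ℕ) :
    j.choose k * j.choose ℓ =
      ∑ m ∈ Finset.range (ℓ + 1),
        j.choose (k + (ℓ - m)) * ((k + (ℓ - m)).choose k * k.choose m) := by
  rcases lt_or_ge j k with hj | hj
  · rw [Nat.choose_eq_zero_of_lt hj, zero_mul]
    refine (Finset.sum_eq_zero fun m hm => ?_).symm
    rw [Nat.choose_eq_zero_of_lt (by omega), zero_mul]
  · obtain ⟨d, rfl⟩ := Nat.exists_eq_add_of_le hj
    rw [Nat.add_choose_eq k d ℓ,
      Finset.Nat.sum_antidiagonal_eq_sum_range_succ (fun a b => k.choose a * d.choose b),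
      Finset.mul_sum]
    refine Finset.sum_congr rfl fun m hm => ?_
    rcases le_or_gt (k + (ℓ - m)) (k + d) with h | h
    · have := Nat.choose_mul (n := k + d) (k := k + (ℓ - m)) (s := k) (Nat.le_add_right _ _)
      rw [Nat.add_sub_cancel_left, Nat.add_sub_cancel_left] at this
      rw [mul_comm (k.choose m) (d.choose (ℓ - m)), ← mul_assoc, ← this, mul_assoc]
    · rw [Nat.choose_eq_zero_of_lt (show d < ℓ - m by omega),
        Nat.choose_eq_zero_of_lt h]; simp

lemma choose_pow_sub_one (p n : ℕ) [hp : Fact p.Prime] (k : ℕ) (hk : k ≤ p ^ n - 1) :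
    ((p ^ n - 1).choose k : ZMod p) = (-1) ^ k := by
  have hN : 1 ≤ p ^ n := Nat.one_le_pow _ _ hp.out.pos
  induction k with
  | zero => simp
  | succ k ih =>
    have h2 : (p ^ n).choose (k + 1) = (p ^ n - 1).choose k + (p ^ n - 1).choose (k + 1) := by
      conv_lhs => rw [show p ^ n = (p ^ n - 1) + 1 by omega, Nat.choose_succ_succ]
    have h3 : ((p ^ n).choose (k + 1) : ZMod p) = 0 := by
      rw [ZMod.natCast_eq_zero_iff]
      exact hp.out.dvd_choose_pow (by omega) (by omega)
    rw [h2] at h3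
    push_cast at h3
    rw [ih (by omega)] at h3
    rw [pow_succ]
    linear_combination h3

/-- For `a_{k,ℓ} = Σ_{j=0}^{p^n-1} C(j,k)·C(j,ℓ)` in `F_p`: it vanishes when
`k + ℓ ≤ p^n - 2` and equals `(-1)^k` when `k + ℓ = p^n - 1`. -/
theorem sum_choose_mul_choose (p n k ℓ : ℕ) [Fact p.Prime] (hn : 1 ≤ n) :
    (k + ℓ ≤ p ^ n - 2 →
      ∑ j ∈ Finset.range (p ^ n), ((j.choose k : ZMod p) * (j.choose ℓ : ZMod p)) = 0) ∧
    (k + ℓ = p ^ n - 1 →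
      ∑ j ∈ Finset.range (p ^ n), ((j.choose k : ZMod p) * (j.choose ℓ : ZMod p))
        = (-1) ^ k) := by
  have hp := (Fact.out : p.Prime)
  have hp2 : 2 ≤ p := hp.two_le
  have hN : p ≤ p ^ n := Nat.le_self_pow (by omega) p
  set N := p ^ n with hNdef
  have key : ∑ j ∈ Finset.range N, ((j.choose k : ZMod p) * (j.choose ℓ : ZMod p)) =
      ∑ m ∈ Finset.range (ℓ + 1),
        (N.choose (k + (ℓ - m) + 1) : ZMod p) *
          (((k + (ℓ - m)).choose k : ZMod p) * (k.choose m : ZMod p)) := by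
    have hterm : ∀ j : ℕ, ((j.choose k : ZMod p) * (j.choose ℓ : ZMod p)) =
        ∑ m ∈ Finset.range (ℓ + 1),
          ((j.choose (k + (ℓ - m)) : ZMod p) *
            (((k + (ℓ - m)).choose k : ZMod p) * (k.choose m : ZMod p))) := by
      intro j
      have h := congrArg (fun x : ℕ => (x : ZMod p)) (prod_id j k ℓ)
      push_cast at h
      exact h
    rw [Finset.sum_congr rfl fun j _ => hterm j, Finset.sum_comm]
    refine Finset.sum_congr rfl fun m hm => ?_
    rw [← Finset.sum_mul, ← Nat.cast_sum, hockey]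
  have hzero : ∀ r, r ≠ 0 → r ≠ N → (N.choose r : ZMod p) = 0 := by
    intro r h1 h2
    rw [ZMod.natCast_eq_zero_iff]
    exact hp.dvd_choose_pow h1 h2
  constructor
  · intro h
    rw [key]
    refine Finset.sum_eq_zero fun m hm => ?_
    rw [hzero _ (by omega) (by omega), zero_mul]
  · intro h
    rw [key, Finset.sum_eq_single 0]
    · simp only [Nat.sub_zero, Nat.choose_zero_right, Nat.cast_one, mul_one]
      rw [show k + ℓ + 1 = N by omega, Nat.choose_self, Nat.cast_one, one_mul,
        show k + ℓ = N - 1 from h]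
      exact choose_pow_sub_one p n k (by omega)
    · intro m hm hm0
      simp only [Finset.mem_range] at hm
      rw [hzero _ (by omega) (by omega), zero_mul]
    · intro h'; simp at h'
end

section
/- In F_p[X,Y], the identity Σ_{j=0}^{p^n-1} (1+X)^j (1+Y)^j = (X + Y + XY)^{p^n - 1} holds. -/
open MvPolynomial

/-- In `F_p[X,Y]` one has `Σ_{j=0}^{p^n-1} (1+X)^j (1+Y)^j = (X + Y + XY)^{p^n-1}`. -/
theorem sum_geom_eq_pow (p n : ℕ) [Fact p.Prime] (hn : 1 ≤ n) :
    ∑ j ∈ Finset.range (p ^ n),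
        (1 + (X 0 : MvPolynomial (Fin 2) (ZMod p))) ^ j * (1 + X 1) ^ j =
      ((X 0 : MvPolynomial (Fin 2) (ZMod p)) + X 1 + X 0 * X 1) ^ (p ^ n - 1) := by
  have hp : p.Prime := Fact.out
  set s : MvPolynomial (Fin 2) (ZMod p) := X 0 + X 1 + X 0 * X 1 with hs_def
  have hs : s ≠ 0 := by
    intro h
    have := congrArg (eval (fun i : Fin 2 => if i = 0 then (1 : ZMod p) else 0)) h
    simp [hs_def] at this
  have hq : 1 ≤ p ^ n := Nat.one_le_pow _ _ hp.pos
  have hrw : ∀ j, (1 + (X 0 : MvPolynomial (Fin 2) (ZMod p))) ^ j * (1 + X 1) ^ j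
      = (1 + s) ^ j := by
    intro j
    rw [← mul_pow]
    congr 1
    rw [hs_def]; ring
  simp only [hrw]
  apply mul_right_cancel₀ hs
  have h1 : (∑ j ∈ Finset.range (p ^ n), (1 + s) ^ j) * ((1 + s) - 1)
      = (1 + s) ^ (p ^ n) - 1 := geom_sum_mul _ _
  have h2 : ((1 + s) - 1) ^ (p ^ n) = (1 + s) ^ (p ^ n) - 1 ^ (p ^ n) :=
    sub_pow_char_pow _ _ _
  have h3 : (1 + s) - 1 = s := by ring
  rw [h3] at h1 h2
  rw [h1, one_pow] at *
  rw [← h2, ← pow_succ, Nat.sub_add_cancel hq]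
end

section
/- For 0 ≤ k ≤ p^n, the orthogonal complement of V_{k,n} with respect to the bilinear pairing ⟨x,y⟩ = Σ_{j=0}^{p^n-1} x_j y_j equals V_{p^n - k, n}. -/
open Finset

namespace BinomOrtho

/-- Antidiagonal Vandermonde / hockey-stick: `∑_{r ≤ M} C(r,a) C(M-r,b) = C(M+1, a+b+1)`. -/
lemma vand_anti : ∀ (M a b : ℕ),
    ∑ r ∈ range (M + 1), (r.choose a) * ((M - r).choose b) = (M + 1).choose (a + b + 1) := by
  intro M
  induction M with
  | zero =>
    intro a b
    cases a <;> cases b <;> simp [Nat.choose]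
  | succ M IH =>
    intro a b
    rw [Finset.sum_range_succ]
    cases b with
    | zero =>
      have : ∀ r ∈ range (M + 1), r.choose a * ((M + 1 - r).choose 0)
          = r.choose a * ((M - r).choose 0) := by intro r _; simp
      rw [Finset.sum_congr rfl this, IH a 0]
      simp [Nat.choose_succ_succ (M + 1) a]
      ring
    | succ b =>
      have : ∀ r ∈ range (M + 1), r.choose a * ((M + 1 - r).choose (b + 1))
          = r.choose a * ((M - r).choose b) + r.choose a * ((M - r).choose (b + 1)) := by
        intro r hr
        rw [Finset.mem_range] at hr
        have h1 : M + 1 - r = (M - r) + 1 := by omega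
        rw [h1, Nat.choose_succ_succ, Nat.mul_add]
      rw [Finset.sum_congr rfl this, Finset.sum_add_distrib, IH a b, IH a (b + 1)]
      have : a + (b + 1) + 1 = (a + b + 1) + 1 := by ring
      rw [this, Nat.choose_succ_succ' (M + 1) (a + b + 1)]
      simp

variable {p : ℕ} [hp : Fact p.Prime]

lemma cast_descFactorial_eq_prod (r b : ℕ) :
    ((r.descFactorial b : ℕ) : ZMod p) = ∏ i ∈ range b, ((r : ZMod p) - i) := by
  rcases lt_or_ge r b with h | h
  · rw [Nat.descFactorial_eq_zero_iff_lt.2 h, Nat.cast_zero]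
    exact (Finset.prod_eq_zero (Finset.mem_range.2 h) (by simp)).symm
  · rw [Nat.descFactorial_eq_prod_range, Nat.cast_prod]
    refine Finset.prod_congr rfl fun i hi => ?_
    rw [Finset.mem_range] at hi
    rw [Nat.cast_sub (by omega)]

lemma neg_desc (b r : ℕ) (hb : b < p) (hr : r < p) :
    ((r.choose b : ℕ) : ZMod p) = (-1) ^ b * (((p - 1 - r + b).choose b : ℕ) : ZMod p) := by
  have hfac : ((Nat.factorial b : ℕ) : ZMod p) ≠ 0 := by
    rw [Ne, ZMod.natCast_eq_zero_iff]
    exact fun h => absurd (hp.out.dvd_factorial.mp h) (by omega)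
  apply mul_left_cancel₀ hfac
  have h1 : ((r.descFactorial b : ℕ) : ZMod p)
      = (-1) ^ b * (((p - 1 - r + b).descFactorial b : ℕ) : ZMod p) := by
    rw [cast_descFactorial_eq_prod, cast_descFactorial_eq_prod]
    rw [← Finset.prod_range_reflect (fun i => ((p - 1 - r + b : ℕ) : ZMod p) - i) b]
    rw [Finset.pow_eq_prod_const, ← Finset.prod_mul_distrib]
    refine Finset.prod_congr rfl fun i hi => ?_
    rw [Finset.mem_range] at hi
    have e1 : ((p - 1 - r + b : ℕ) : ZMod p) = (b : ZMod p) - r - 1 := by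
      have : (p - 1 - r + b : ℕ) = (p - (1 + r)) + b := by omega
      rw [this, Nat.cast_add, Nat.cast_sub (by omega)]
      push_cast
      rw [ZMod.natCast_self]
      ring
    have e2 : ((b - 1 - i : ℕ) : ZMod p) = (b : ZMod p) - 1 - i := by
      rw [Nat.cast_sub (by omega), Nat.cast_sub (by omega)]
      push_cast; ring
    rw [e1, e2]
    ring
  calc ((Nat.factorial b : ℕ) : ZMod p) * ((r.choose b : ℕ) : ZMod p)
      = ((r.descFactorial b : ℕ) : ZMod p) := by
        rw [Nat.descFactorial_eq_factorial_mul_choose]; push_cast; ring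
    _ = (-1) ^ b * (((p - 1 - r + b).descFactorial b : ℕ) : ZMod p) := h1
    _ = ((Nat.factorial b : ℕ) : ZMod p) * ((-1) ^ b * (((p - 1 - r + b).choose b : ℕ) : ZMod p)) := by
        rw [Nat.descFactorial_eq_factorial_mul_choose]; push_cast; ring

lemma lucas' (x y : ℕ) :
    ((x.choose y : ℕ) : ZMod p) = ((x % p).choose (y % p) : ℕ) * ((x / p).choose (y / p) : ℕ) := by
  have := (Choose.choose_modEq_choose_mod_mul_choose_div_nat (n := x) (k := y) (p := p))
  have h2 := (ZMod.natCast_eq_natCast_iff _ _ _).2 this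
  rw [h2]; push_cast; ring

lemma gbase (a b : ℕ) (ha : a < p) (hb : b < p) :
    ∑ r ∈ range p, ((r.choose a : ℕ) : ZMod p) * ((r.choose b : ℕ) : ZMod p)
      = (-1) ^ b * (((p + b).choose (a + b + 1) : ℕ) : ZMod p) := by
  have hT : ∑ r ∈ range p, (r.choose a) * ((p - 1 + b - r).choose b) = (p + b).choose (a + b + 1) := by
    have hpb : p - 1 + b + 1 = p + b := by
      have := hp.out.two_le; omega
    rw [← hpb, ← vand_anti (p - 1 + b) a b]
    apply Finset.sum_subset (Finset.range_subset_range.2 (by omega))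
    intro r hr hnr
    rw [Finset.mem_range] at hr hnr
    have : p - 1 + b - r < b := by omega
    rw [Nat.choose_eq_zero_of_lt this, Nat.mul_zero]
  calc ∑ r ∈ range p, ((r.choose a : ℕ) : ZMod p) * ((r.choose b : ℕ) : ZMod p)
      = ∑ r ∈ range p, (-1) ^ b *
          (((r.choose a) * ((p - 1 + b - r).choose b) : ℕ) : ZMod p) := by
        refine Finset.sum_congr rfl fun r hr => ?_
        rw [Finset.mem_range] at hr
        rw [neg_desc b r hb hr]
        have : p - 1 - r + b = p - 1 + b - r := by omega
        rw [this]; push_cast; ring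
    _ = (-1) ^ b * (((p + b).choose (a + b + 1) : ℕ) : ZMod p) := by
        rw [← Finset.mul_sum, ← Nat.cast_sum, hT]

lemma neg_one_pow_eq (a b : ℕ) (h : a + b = p - 1) : ((-1 : ZMod p)) ^ b = (-1) ^ a := by
  rcases hp.out.eq_two_or_odd' with h2 | hodd
  · subst h2
    have : (-1 : ZMod 2) = 1 := rfl
    rw [this, one_pow, one_pow]
  · have hev : Even (a + b) := by
      rw [h]; exact Nat.Odd.sub_odd hodd odd_one
    have h1 : ((-1 : ZMod p)) ^ (a + b) = 1 := hev.neg_one_pow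
    calc ((-1 : ZMod p)) ^ b = (-1) ^ b * ((-1) ^ a * (-1) ^ a) := by
          rw [← pow_add]
          have : Even (a + a) := Even.add_self a
          rw [this.neg_one_pow, mul_one]
      _ = (-1) ^ a * (-1) ^ (a + b) := by rw [pow_add]; ring
      _ = (-1) ^ a := by rw [h1, mul_one]

lemma gbase_lt (a b : ℕ) (ha : a < p) (hb : b < p) (h : a + b < p - 1) :
    ∑ r ∈ range p, ((r.choose a : ℕ) : ZMod p) * ((r.choose b : ℕ) : ZMod p) = 0 := by
  rw [gbase a b ha hb, lucas' (p + b) (a + b + 1)]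
  have h1 : (p + b) % p = b := by rw [Nat.add_mod_left]; exact Nat.mod_eq_of_lt hb
  have h2 : (p + b) / p = 1 := by
    rw [Nat.add_div_left _ hp.out.pos, Nat.div_eq_of_lt hb]
  have h3 : (a + b + 1) % p = a + b + 1 := Nat.mod_eq_of_lt (by omega)
  have h4 : (a + b + 1) / p = 0 := Nat.div_eq_of_lt (by omega)
  rw [h1, h2, h3, h4, Nat.choose_eq_zero_of_lt (by omega)]
  simp

lemma gbase_eq (a b : ℕ) (ha : a < p) (hb : b < p) (h : a + b = p - 1) :
    ∑ r ∈ range p, ((r.choose a : ℕ) : ZMod p) * ((r.choose b : ℕ) : ZMod p) = (-1) ^ a := by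
  rw [gbase a b ha hb, lucas' (p + b) (a + b + 1)]
  have hab : a + b + 1 = p := by
    have := hp.out.two_le; omega
  have h1 : (p + b) % p = b := by rw [Nat.add_mod_left]; exact Nat.mod_eq_of_lt hb
  have h2 : (p + b) / p = 1 := by
    rw [Nat.add_div_left _ hp.out.pos, Nat.div_eq_of_lt hb]
  rw [hab, h1, h2, Nat.mod_self, Nat.div_self hp.out.pos]
  simp [neg_one_pow_eq a b h]

lemma sum_range_mul' {M : Type*} [AddCommMonoid M] (f : ℕ → M) (m k : ℕ) :
    ∑ j ∈ range (m * k), f j = ∑ q ∈ range m, ∑ r ∈ range k, f (k * q + r) := by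
  induction m with
  | zero => simp
  | succ m IH =>
    have : (m + 1) * k = m * k + k := by ring
    rw [this, Finset.sum_range_add, IH, Finset.sum_range_succ]
    congr 1
    refine Finset.sum_congr rfl fun r _ => ?_
    congr 1
    ring

/-- Main Gram lemma mod `p`. -/
lemma gram_main : ∀ (n a b : ℕ), a + b ≤ p ^ n - 1 →
    ∑ j ∈ range (p ^ n), ((j.choose a : ℕ) : ZMod p) * ((j.choose b : ℕ) : ZMod p)
      = if a + b = p ^ n - 1 then (-1) ^ a else 0 := by
  intro n
  induction n with
  | zero =>
    intro a b h
    simp only [pow_zero] at *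
    obtain ⟨rfl, rfl⟩ : a = 0 ∧ b = 0 := by omega
    simp
  | succ n IH =>
    intro a b h
    have hp2 := hp.out.two_le
    have hP : 1 ≤ p ^ n := Nat.one_le_pow _ _ hp.out.pos
    have hpow : p ^ (n + 1) = p ^ n * p := pow_succ p n
    have hfact : ∑ j ∈ range (p ^ (n + 1)), ((j.choose a : ℕ) : ZMod p) * ((j.choose b : ℕ) : ZMod p)
        = (∑ q ∈ range (p ^ n), ((q.choose (a / p) : ℕ) : ZMod p) * ((q.choose (b / p) : ℕ) : ZMod p))
          * (∑ r ∈ range p, ((r.choose (a % p) : ℕ) : ZMod p) * ((r.choose (b % p) : ℕ) : ZMod p)) := by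
      rw [hpow, sum_range_mul']
      rw [Finset.sum_mul_sum]
      refine Finset.sum_congr rfl fun q hq => Finset.sum_congr rfl fun r hr => ?_
      rw [Finset.mem_range] at hq hr
      rw [lucas' (p * q + r) a, lucas' (p * q + r) b]
      have h1 : (p * q + r) % p = r := by
        rw [Nat.mul_add_mod]; exact Nat.mod_eq_of_lt hr
      have h2 : (p * q + r) / p = q := by
        rw [Nat.mul_add_div hp.out.pos, Nat.div_eq_of_lt hr, add_zero]
      rw [h1, h2]; ring
    rw [hfact]
    set s := a % p + b % p with hs
    set t := a / p + b / p with ht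
    have hap : a % p < p := Nat.mod_lt _ hp.out.pos
    have hbp : b % p < p := Nat.mod_lt _ hp.out.pos
    have hsum_a : p * (a / p) + a % p = a := Nat.div_add_mod a p
    have hsum_b : p * (b / p) + b % p = b := Nat.div_add_mod b p
    have hmt : p * t = p * (a / p) + p * (b / p) := by rw [ht, Nat.mul_add]
    have habst : a + b = p * t + s := by omega
    rcases lt_or_ge s (p - 1) with hslt | hsge
    · rw [gbase_lt _ _ hap hbp hslt, mul_zero]
      rw [if_neg]
      intro hcon
      have : (p * t + s) % p = (p * (p ^ n - 1) + (p - 1)) % p := by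
        rw [← habst, hcon, hpow]
        congr 1
        have hq : p * (p ^ n - 1) + p = p * p ^ n := by
          rw [← Nat.mul_succ]; congr 1; omega
        have : p ^ n * p = p * p ^ n := Nat.mul_comm _ _
        omega
      rw [Nat.mul_add_mod, Nat.mul_add_mod] at this
      rw [Nat.mod_eq_of_lt (by omega), Nat.mod_eq_of_lt (by omega)] at this
      omega
    · rcases eq_or_ne (a + b) (p ^ (n + 1) - 1) with heq | hne
      · have hkey : p * t + s = p * (p ^ n - 1) + (p - 1) := by
          rw [← habst, heq, hpow]
          have hq : p * (p ^ n - 1) + p = p * p ^ n := by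
            rw [← Nat.mul_succ]; congr 1; omega
          have : p ^ n * p = p * p ^ n := Nat.mul_comm _ _
          omega
        have hs2 : s ≤ 2 * p - 2 := by omega
        have hseq : s = p - 1 := by
          rcases Nat.lt_or_ge t (p ^ n - 1) with h1 | h1
          · have : p * (t + 1) ≤ p * (p ^ n - 1) := Nat.mul_le_mul_left p (by omega)
            rw [Nat.mul_add, Nat.mul_one] at this
            omega
          · have : p * (p ^ n - 1) ≤ p * t := Nat.mul_le_mul_left p h1
            omega
        have hteq : t = p ^ n - 1 := by
          have h1 : p * t = p * (p ^ n - 1) := by omega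
          exact Nat.eq_of_mul_eq_mul_left hp.out.pos h1
        rw [if_pos heq, gbase_eq _ _ hap hbp hseq, IH _ _ (le_of_eq hteq), if_pos hteq]
        have : (-1 : ZMod p) ^ (a / p) * (-1) ^ (a % p) = (-1) ^ a := by
          conv_rhs => rw [← hsum_a]
          rw [pow_add, pow_mul]
          rcases hp.out.eq_two_or_odd' with h2 | hodd
          · have : (-1 : ZMod p) = 1 := by subst h2; rfl
            simp [this]
          · rw [hodd.neg_one_pow]
        rw [← this]
      · rw [if_neg hne]
        have hlt : a + b ≤ p ^ (n + 1) - 2 := by omega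
        have ht2 : p * (t + 1) < p * p ^ n := by
          rw [Nat.mul_add, Nat.mul_one]
          have : p * p ^ n = p ^ (n + 1) := by rw [hpow]; ring
          omega
        have ht3 : t + 1 < p ^ n := lt_of_mul_lt_mul_left ht2 (Nat.zero_le p)
        rw [IH _ _ (by omega), if_neg (by omega), zero_mul]

variable (E : Type*) [Field E] [CharP E p]

lemma gramE (n a b : ℕ) (h : a + b ≤ p ^ n - 1) :
    ∑ j : Fin (p ^ n), (((j : ℕ).choose a : ℕ) : E) * (((j : ℕ).choose b : ℕ) : E)
      = if a + b = p ^ n - 1 then (-1) ^ a else 0 := by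
  have hcast := congrArg (ZMod.castHom dvd_rfl E) (gram_main n a b h)
  rw [map_sum] at hcast
  rw [Fin.sum_univ_eq_sum_range (fun j => ((j.choose a : ℕ) : E) * ((j.choose b : ℕ) : E))]
  convert hcast using 2 with j hj
  · rw [map_mul, map_natCast, map_natCast]
  · split_ifs with h1
    · rw [map_pow, map_neg, map_one]
    · rw [map_zero]

end BinomOrtho

/-- For `0 ≤ k ≤ p^n`, the orthogonal complement of `V_{k,n}` (the span of the binomial
vectors `v_{ℓ,n} = (C(j,ℓ) mod p)_j`, `ℓ < k`) with respect to the pairing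
`⟨x,y⟩ = Σ_j x_j y_j` is `V_{p^n-k,n}`. -/
theorem binom_span_orthogonal (p n : ℕ) [Fact p.Prime] (hn : 1 ≤ n)
    (E : Type*) [Field E] [CharP E p] (k : ℕ) (hk : k ≤ p ^ n) :
    {x : Fin (p ^ n) → E |
        ∀ y ∈ Submodule.span E
            {w : Fin (p ^ n) → E | ∃ ℓ < k, w = fun j : Fin (p ^ n) => (((j : ℕ).choose ℓ : E))},
          ∑ j, x j * y j = 0} =
      ↑(Submodule.span E
          {w : Fin (p ^ n) → E | ∃ ℓ < p ^ n - k, w = fun j : Fin (p ^ n) => (((j : ℕ).choose ℓ : E))}) := by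
  classical
  have hp' : p.Prime := Fact.out
  have hN1 : 1 ≤ p ^ n := Nat.one_le_pow _ _ hp'.pos
  have gram : ∀ a b : ℕ, a + b ≤ p ^ n - 1 →
      (∑ j : Fin (p ^ n), (((j : ℕ).choose a : ℕ) : E) * (((j : ℕ).choose b : ℕ) : E))
        = if a + b = p ^ n - 1 then (-1) ^ a else 0 := fun a b h => BinomOrtho.gramE E n a b h
  ext x
  simp only [Set.mem_setOf_eq, SetLike.mem_coe]
  constructor
  · -- hard direction: orthogonal elements lie in the span
    intro h
    set A : Matrix (Fin (p ^ n)) (Fin (p ^ n)) E :=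
      Matrix.of (fun j ℓ : Fin (p ^ n) => (((j : ℕ).choose (ℓ : ℕ) : ℕ) : E)) with hA
    have htri : A.BlockTriangular OrderDual.toDual := by
      intro i j hij
      have hij' : (i : ℕ) < (j : ℕ) := hij
      simp [hA, Nat.choose_eq_zero_of_lt hij']
    have hdet : IsUnit A.det := by
      rw [Matrix.det_of_lowerTriangular A htri]
      have hdiag : ∀ i : Fin (p ^ n), A i i = 1 := by
        intro i; simp [hA]
      simp [hdiag]
    set c : Fin (p ^ n) → E := A⁻¹.mulVec x with hc
    have hmv : A.mulVec c = x := by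
      rw [hc, Matrix.mulVec_mulVec, Matrix.mul_nonsing_inv A hdet, Matrix.one_mulVec]
    have hxj : ∀ j, x j = ∑ ℓ : Fin (p ^ n), A j ℓ * c ℓ := by
      intro j
      rw [← hmv]
      simp [Matrix.mulVec, dotProduct]
    have hG : ∀ a : ℕ, a < k →
        ∑ ℓ : Fin (p ^ n), c ℓ *
          (∑ j : Fin (p ^ n), (((j : ℕ).choose a : ℕ) : E) * (((j : ℕ).choose (ℓ : ℕ) : ℕ) : E)) = 0 := by
      intro a ha
      have h0 := h (fun j : Fin (p ^ n) => (((j : ℕ).choose a : ℕ) : E))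
        (Submodule.subset_span ⟨a, ha, rfl⟩)
      calc ∑ ℓ : Fin (p ^ n), c ℓ *
            (∑ j : Fin (p ^ n), (((j : ℕ).choose a : ℕ) : E) * (((j : ℕ).choose (ℓ : ℕ) : ℕ) : E))
          = ∑ ℓ : Fin (p ^ n), ∑ j : Fin (p ^ n),
              c ℓ * ((((j : ℕ).choose a : ℕ) : E) * (((j : ℕ).choose (ℓ : ℕ) : ℕ) : E)) := by
            simp_rw [Finset.mul_sum]
        _ = ∑ j : Fin (p ^ n), ∑ ℓ : Fin (p ^ n),
              c ℓ * ((((j : ℕ).choose a : ℕ) : E) * (((j : ℕ).choose (ℓ : ℕ) : ℕ) : E)) :=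
            Finset.sum_comm
        _ = ∑ j : Fin (p ^ n), x j * (((j : ℕ).choose a : ℕ) : E) := by
            refine Finset.sum_congr rfl fun j _ => ?_
            rw [hxj j, Finset.sum_mul]
            refine Finset.sum_congr rfl fun ℓ _ => ?_
            simp only [hA, Matrix.of_apply]
            ring
        _ = 0 := h0
    have hckey : ∀ a : ℕ, a < k → c ⟨p ^ n - 1 - a, by omega⟩ = 0 := by
      intro a
      induction a using Nat.strong_induction_on with
      | _ a IH =>
        intro ha
        have h0 := hG a ha
        set ℓ₀ : Fin (p ^ n) := ⟨p ^ n - 1 - a, by omega⟩ with hℓ₀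
        rw [← Finset.add_sum_erase _ _ (Finset.mem_univ ℓ₀)] at h0
        have hzero : ∀ ℓ ∈ Finset.univ.erase ℓ₀,
            c ℓ * (∑ j : Fin (p ^ n), (((j : ℕ).choose a : ℕ) : E) * (((j : ℕ).choose (ℓ : ℕ) : ℕ) : E))
              = 0 := by
          intro ℓ hℓ
          have hne : ℓ ≠ ℓ₀ := (Finset.mem_erase.mp hℓ).1
          have hnev : (ℓ : ℕ) ≠ p ^ n - 1 - a := by
            intro hcon; exact hne (Fin.ext hcon)
          have hlt := ℓ.isLt
          rcases lt_or_gt_of_ne hnev with hl | hl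
          · rw [gram a (ℓ : ℕ) (by omega), if_neg (by omega), mul_zero]
          · have hIH := IH ((p ^ n - 1 - (ℓ : ℕ))) (by omega) (by omega)
            have hfin : (⟨p ^ n - 1 - (p ^ n - 1 - (ℓ : ℕ)), by omega⟩ : Fin (p ^ n)) = ℓ :=
              Fin.ext (by simp; omega)
            rw [hfin] at hIH
            rw [hIH, zero_mul]
        rw [Finset.sum_eq_zero hzero, add_zero] at h0
        have hg : (∑ j : Fin (p ^ n), (((j : ℕ).choose a : ℕ) : E) * (((j : ℕ).choose ((ℓ₀ : ℕ)) : ℕ) : E))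
            = (-1) ^ a := by
          have hval : (ℓ₀ : ℕ) = p ^ n - 1 - a := rfl
          rw [hval, gram a (p ^ n - 1 - a) (by omega), if_pos (by omega)]
        rw [hg] at h0
        have hne0 : ((-1 : E)) ^ a ≠ 0 := pow_ne_zero _ (neg_ne_zero.mpr one_ne_zero)
        exact (mul_eq_zero.mp h0).resolve_right hne0
    have hxs : x = ∑ ℓ ∈ Finset.univ.filter (fun ℓ : Fin (p ^ n) => (ℓ : ℕ) < p ^ n - k),
        c ℓ • (fun j : Fin (p ^ n) => (((j : ℕ).choose (ℓ : ℕ) : ℕ) : E)) := by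
      funext j
      rw [hxj j, Finset.sum_apply]
      have hvan : ∀ ℓ ∈ Finset.univ, ℓ ∉ Finset.univ.filter (fun ℓ : Fin (p ^ n) => (ℓ : ℕ) < p ^ n - k) →
          A j ℓ * c ℓ = 0 := by
        intro ℓ _ hℓ
        simp only [Finset.mem_filter, Finset.mem_univ, true_and, not_lt] at hℓ
        have hlt := ℓ.isLt
        have hc0 := hckey (p ^ n - 1 - (ℓ : ℕ)) (by omega)
        have hfin : (⟨p ^ n - 1 - (p ^ n - 1 - (ℓ : ℕ)), by omega⟩ : Fin (p ^ n)) = ℓ :=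
          Fin.ext (by simp; omega)
        rw [hfin] at hc0
        simp [hA, hc0]
      rw [← Finset.sum_subset (Finset.filter_subset _ Finset.univ) hvan]
      refine Finset.sum_congr rfl fun ℓ _ => ?_
      simp only [hA, Matrix.of_apply, Pi.smul_apply, smul_eq_mul]
      ring
    rw [hxs]
    refine Submodule.sum_mem _ fun ℓ hℓ => Submodule.smul_mem _ _ (Submodule.subset_span ?_)
    exact ⟨(ℓ : ℕ), (Finset.mem_filter.mp hℓ).2, rfl⟩
  · -- easy direction
    intro hx y hy
    induction hx using Submodule.span_induction with
    | mem w hw =>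
      obtain ⟨b, hb, rfl⟩ := hw
      induction hy using Submodule.span_induction with
      | mem z hz =>
        obtain ⟨a, ha, rfl⟩ := hz
        rw [gram b a (by omega), if_neg (by omega)]
      | zero => simp
      | add u v hu hv ihu ihv =>
        simp only [Pi.add_apply, mul_add, Finset.sum_add_distrib, ihu, ihv, add_zero]
      | smul t u hu ihu =>
        have : ∀ j : Fin (p ^ n), (((j : ℕ).choose b : ℕ) : E) * (t • u) j
            = t * ((((j : ℕ).choose b : ℕ) : E) * u j) := by
          intro j; simp only [Pi.smul_apply, smul_eq_mul]; ring
        simp only [this, ← Finset.mul_sum, ihu, mul_zero]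
    | zero => simp
    | add u v hu hv ihu ihv =>
      simp only [Pi.add_apply, add_mul, Finset.sum_add_distrib, ihu, ihv, add_zero]
    | smul t u hu ihu =>
      have : ∀ j : Fin (p ^ n), (t • u) j * y j = t * (u j * y j) := by
        intro j; simp only [Pi.smul_apply, smul_eq_mul]; ring
      simp only [this, ← Finset.mul_sum, ihu, mul_zero]
end

section
/- Let Δ: V_n → V_n be defined by (Δx)_j = x_{j-1} - x_j (indices mod p^n). If 0 ≤ k + ℓ ≤ p^n, then Δ^k restricts to a surjection V_{ℓ+k,n} → V_{ℓ,n} with kernel V_{k,n}; moreover, for x ∈ V_n, Δ^k(x) ∈ V_{ℓ,n} if and only if x ∈ V_{ℓ+k,n}. -/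
set_option linter.unusedSectionVars false

/-- The binomial vector `v_{m,n}` in `V_n = E^{Z/p^nZ}`, `j ↦ C(j,m) mod p`. -/
def vSeq (p n : ℕ) (E : Type*) [Semiring E] (m : ℕ) : ZMod (p ^ n) → E :=
  fun j => ((ZMod.val j).choose m : E)

/-- The subspace `V_{k,n}`, spanned by the `v_{ℓ,n}` for `0 ≤ ℓ < k`. -/
def VSpan (p n : ℕ) (E : Type*) [Field E] (k : ℕ) : Submodule E (ZMod (p ^ n) → E) :=
  Submodule.span E {w | ∃ ℓ < k, w = vSeq p n E ℓ}

/-- The difference operator `Δ`, `(Δx)_j = x_{j-1} - x_j`, indices mod `p^n`. -/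
def delta (p n : ℕ) (E : Type*) [Ring E] (x : ZMod (p ^ n) → E) : ZMod (p ^ n) → E :=
  fun j => x (j - 1) - x j

section Aux
variable (p n : ℕ) [Fact p.Prime] (E : Type*) [Field E] [CharP E p]

lemma choose_add_pow_cast (b m : ℕ) (hm : m < p ^ n) :
    ((b + p ^ n).choose m : E) = (b.choose m : E) := by
  rw [Nat.add_choose_eq]
  push_cast
  rw [Finset.Nat.sum_antidiagonal_eq_sum_range_succ_mk, Finset.sum_range_succ]
  have h0 : ∀ i ∈ Finset.range m, (b.choose i : E) * ((p^n).choose (m - i) : E) = 0 := by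
    intro i hi
    have him : i < m := Finset.mem_range.mp hi
    have h1 : m - i ≠ 0 := by omega
    have h2 : m - i ≠ p ^ n := by omega
    rw [(CharP.cast_eq_zero_iff E p _).mpr ((Fact.out (p := p.Prime)).dvd_choose_pow h1 h2)]
    ring
  rw [Finset.sum_eq_zero h0]
  simp

lemma keyPeriod [NeZero (p ^ n)] (a m : ℕ) (hm : m < p ^ n) :
    ((a.choose m : E)) = ((((a : ZMod (p ^ n))).val.choose m : E)) := by
  rw [ZMod.val_natCast]
  conv_lhs => rw [← Nat.mod_add_div a (p ^ n)]
  generalize a / p ^ n = q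
  induction q with
  | zero => simp
  | succ t ih =>
      rw [Nat.mul_succ, ← Nat.add_assoc, choose_add_pow_cast p n E _ m hm, ih]

/-- The shifted, signed binomial vector `u_m`. -/
def uSeq (m : ℕ) : ZMod (p ^ n) → E :=
  fun j => (-1 : E) ^ m * (((j + (m : ZMod (p ^ n))).val).choose m : E)

lemma uSeq_zero : uSeq p n E 0 = fun _ => 1 := by
  funext j; simp [uSeq]

lemma delta_uSeq [NeZero (p ^ n)] (m : ℕ) (hm : m + 1 < p ^ n) :
    delta p n E (uSeq p n E (m + 1)) = uSeq p n E m := by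
  funext j
  set c : ℕ := (j + (m : ZMod (p ^ n))).val with hc
  have hcast : ((c : ℕ) : ZMod (p ^ n)) = j + (m : ZMod (p ^ n)) :=
    ZMod.natCast_rightInverse _
  have h1 : uSeq p n E (m + 1) (j - 1) = (-1 : E) ^ (m+1) * (c.choose (m+1) : E) := by
    unfold uSeq
    have harg : (j - 1) + ((m + 1 : ℕ) : ZMod (p ^ n)) = ((c : ℕ) : ZMod (p ^ n)) := by
      push_cast; rw [hcast]; ring
    rw [harg, ZMod.val_natCast_of_lt (ZMod.val_lt _)]
  have h2 : uSeq p n E (m + 1) j = (-1 : E) ^ (m+1) * ((c + 1).choose (m+1) : E) := by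
    unfold uSeq
    have harg : j + ((m + 1 : ℕ) : ZMod (p ^ n)) = ((c + 1 : ℕ) : ZMod (p ^ n)) := by
      push_cast; rw [hcast]; ring
    rw [harg, ← keyPeriod p n E (c + 1) (m + 1) hm]
  rw [show delta p n E (uSeq p n E (m + 1)) j
      = uSeq p n E (m + 1) (j - 1) - uSeq p n E (m + 1) j from rfl, h1, h2]
  rw [Nat.choose_succ_succ']
  unfold uSeq
  rw [← hc]
  push_cast
  ring

lemma delta_uSeq_zero : delta p n E (uSeq p n E 0) = 0 := by
  funext j
  simp [delta, uSeq_zero]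

/-- `Δ` as a linear map. -/
def Dmap : (ZMod (p ^ n) → E) →ₗ[E] (ZMod (p ^ n) → E) where
  toFun := delta p n E
  map_add' x y := by funext j; simp only [delta, Pi.add_apply]; ring
  map_smul' c x := by funext j; simp only [delta, Pi.smul_apply, smul_eq_mul,
    RingHom.id_apply]; ring

lemma iterate_delta_eq (k : ℕ) (x : ZMod (p ^ n) → E) :
    (delta p n E)^[k] x = ((Dmap p n E) ^ k) x := by
  rw [Module.End.pow_apply]; rfl

lemma Dpow_u_le [NeZero (p ^ n)] (k m : ℕ) (hkm : k ≤ m) (hm : m < p ^ n) :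
    ((Dmap p n E) ^ k) (uSeq p n E m) = uSeq p n E (m - k) := by
  induction k with
  | zero => simp
  | succ t ih =>
      rw [pow_succ', Module.End.mul_apply, ih (by omega)]
      have h2 : m - t - 1 + 1 = m - t := by omega
      rw [show Dmap p n E (uSeq p n E (m - t)) = delta p n E (uSeq p n E (m - t)) from rfl,
        ← h2, delta_uSeq p n E (m - t - 1) (by omega)]
      congr 1

lemma Dpow_u_gt [NeZero (p ^ n)] (k m : ℕ) (hm : m < k) (hmN : m < p ^ n) :
    ((Dmap p n E) ^ k) (uSeq p n E m) = 0 := by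
  obtain ⟨t, rfl⟩ : ∃ t, k = t + 1 + m := ⟨k - 1 - m, by omega⟩
  rw [pow_add, Module.End.mul_apply, Dpow_u_le p n E m m le_rfl hmN, Nat.sub_self,
    pow_succ, Module.End.mul_apply,
    show Dmap p n E (uSeq p n E 0) = delta p n E (uSeq p n E 0) from rfl,
    delta_uSeq_zero, map_zero]

lemma u_sum [NeZero (p ^ n)] (m : ℕ) (hm : m < p ^ n) :
    uSeq p n E m
      = ∑ i ∈ Finset.range (m + 1),
          ((-1 : E) ^ m * (m.choose (m - i) : E)) • vSeq p n E i := by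
  funext j
  have h1 : uSeq p n E m j = (-1 : E) ^ m * ((j.val + m).choose m : E) := by
    unfold uSeq
    have harg : j + (m : ZMod (p ^ n)) = ((j.val + m : ℕ) : ZMod (p ^ n)) := by
      push_cast; rw [ZMod.natCast_rightInverse j]
    rw [harg, ← keyPeriod p n E (j.val + m) m hm]
  rw [h1, Nat.add_choose_eq, Finset.Nat.sum_antidiagonal_eq_sum_range_succ_mk]
  push_cast
  rw [Finset.mul_sum, Finset.sum_apply]
  refine Finset.sum_congr rfl fun i hi => ?_
  simp only [Pi.smul_apply, smul_eq_mul, vSeq]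
  ring

/-- Span of the `u_m`, `m < k`. -/
def USpan (k : ℕ) : Submodule E (ZMod (p ^ n) → E) :=
  Submodule.span E {w | ∃ m < k, w = uSeq p n E m}

lemma u_mem_USpan (m k : ℕ) (hmk : m < k) : uSeq p n E m ∈ USpan p n E k :=
  Submodule.subset_span ⟨m, hmk, rfl⟩

lemma u_mem_VSpan [NeZero (p ^ n)] (m k : ℕ) (hmk : m < k) (hk : k ≤ p ^ n) :
    uSeq p n E m ∈ VSpan p n E k := by
  rw [u_sum p n E m (lt_of_lt_of_le hmk hk)]
  refine Submodule.sum_mem _ fun i hi => Submodule.smul_mem _ _ (Submodule.subset_span ?_)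
  exact ⟨i, by have := Finset.mem_range.mp hi; omega, rfl⟩

lemma v_mem_USpan [NeZero (p ^ n)] (m k : ℕ) (hmk : m < k) (hk : k ≤ p ^ n) :
    vSeq p n E m ∈ USpan p n E k := by
  induction m using Nat.strong_induction_on with
  | _ m ih =>
    have hm : m < p ^ n := lt_of_lt_of_le hmk hk
    have heq := u_sum p n E m hm
    rw [Finset.sum_range_succ, Nat.sub_self, Nat.choose_zero_right, Nat.cast_one,
      mul_one] at heq
    have hsq : ((-1 : E) ^ m) * ((-1 : E) ^ m) = 1 := by
      rw [← pow_add]; exact Even.neg_one_pow ⟨m, rfl⟩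
    have h1 : vSeq p n E m
        = ((-1 : E) ^ m) • uSeq p n E m
          - ((-1 : E) ^ m) • ∑ i ∈ Finset.range m,
              ((-1 : E) ^ m * (m.choose (m - i) : E)) • vSeq p n E i := by
      rw [heq, smul_add, add_sub_cancel_left, smul_smul, hsq, one_smul]
    rw [h1]
    refine Submodule.sub_mem _ (Submodule.smul_mem _ _ (u_mem_USpan p n E m k hmk))
      (Submodule.smul_mem _ _ (Submodule.sum_mem _ fun i hi => Submodule.smul_mem _ _ ?_))
    exact ih i (Finset.mem_range.mp hi) (by have := Finset.mem_range.mp hi; omega)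

lemma USpan_eq_VSpan [NeZero (p ^ n)] (k : ℕ) (hk : k ≤ p ^ n) :
    USpan p n E k = VSpan p n E k := by
  apply le_antisymm
  · rw [USpan, Submodule.span_le]
    rintro w ⟨m, hm, rfl⟩
    exact u_mem_VSpan p n E m k hm hk
  · rw [VSpan, Submodule.span_le]
    rintro w ⟨m, hm, rfl⟩
    exact v_mem_USpan p n E m k hm hk

lemma eq_const_of_delta [NeZero (p ^ n)] (x : ZMod (p ^ n) → E)
    (hx : Dmap p n E x = 0) : x = (x 0) • uSeq p n E 0 := by
  have key : ∀ m : ℕ, x ((m : ZMod (p ^ n))) = x 0 := by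
    intro m
    induction m with
    | zero => norm_num
    | succ t ih =>
        have h := congrFun hx (((t + 1 : ℕ) : ZMod (p ^ n)))
        have h2 : (((t + 1 : ℕ) : ZMod (p ^ n))) - 1 = ((t : ℕ) : ZMod (p ^ n)) := by
          push_cast; ring
        simp only [show Dmap p n E x = delta p n E x from rfl, delta, Pi.zero_apply,
          sub_eq_zero, h2] at h
        rw [← h, ih]
  funext j
  rw [uSeq_zero]
  simp only [Pi.smul_apply, smul_eq_mul, mul_one]
  rw [← ZMod.natCast_rightInverse j, key]

lemma delta_pow_ker [NeZero (p ^ n)] (k : ℕ) (hk : k ≤ p ^ n) (x : ZMod (p ^ n) → E)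
    (hx : ((Dmap p n E) ^ k) x = 0) : x ∈ USpan p n E k := by
  induction k generalizing x with
  | zero => simp only [pow_zero, Module.End.one_apply] at hx; rw [hx]; exact Submodule.zero_mem _
  | succ t ih =>
      have h1 : ((Dmap p n E) ^ t) (Dmap p n E x) = 0 := by
        rw [← Module.End.mul_apply, ← pow_succ]; exact hx
      have h2 : Dmap p n E x ∈ USpan p n E t := ih (by omega) _ h1
      -- surjectivity of Δ : USpan (t+1) → USpan t
      have h3 : ∃ x' ∈ USpan p n E (t + 1), Dmap p n E x' = Dmap p n E x := by
        refine Submodule.span_induction ?_ ?_ ?_ ?_ h2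
        · rintro w ⟨m, hm, rfl⟩
          refine ⟨uSeq p n E (m + 1), u_mem_USpan p n E (m + 1) (t + 1) (by omega), ?_⟩
          exact delta_uSeq p n E m (by omega)
        · exact ⟨0, Submodule.zero_mem _, map_zero _⟩
        · rintro a b _ _ ⟨xa, hxa, hda⟩ ⟨xb, hxb, hdb⟩
          exact ⟨xa + xb, Submodule.add_mem _ hxa hxb, by rw [map_add, hda, hdb]⟩
        · rintro c a _ ⟨xa, hxa, hda⟩
          exact ⟨c • xa, Submodule.smul_mem _ _ hxa, by rw [map_smul, hda]⟩
      obtain ⟨x', hx', hdx'⟩ := h3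
      have h4 : Dmap p n E (x - x') = 0 := by rw [map_sub, hdx', sub_self]
      have h5 : x - x' = ((x - x') 0) • uSeq p n E 0 := eq_const_of_delta p n E _ h4
      have h6 : x = ((x - x') 0) • uSeq p n E 0 + x' := by rw [← h5]; abel
      rw [h6]
      exact Submodule.add_mem _
        (Submodule.smul_mem _ _ (u_mem_USpan p n E 0 (t + 1) (by omega))) hx'

lemma USpan_mono (k k' : ℕ) (h : k ≤ k') : USpan p n E k ≤ USpan p n E k' :=
  Submodule.span_mono (by rintro w ⟨m, hm, rfl⟩; exact ⟨m, by omega, rfl⟩)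

lemma Dpow_surj [NeZero (p ^ n)] (k ℓ : ℕ) (h : ℓ + k ≤ p ^ n) :
    ∀ y ∈ USpan p n E ℓ, ∃ x ∈ USpan p n E (ℓ + k), ((Dmap p n E) ^ k) x = y := by
  intro y hy
  refine Submodule.span_induction ?_ ?_ ?_ ?_ hy
  · rintro w ⟨m, hm, rfl⟩
    refine ⟨uSeq p n E (m + k), u_mem_USpan p n E (m + k) (ℓ + k) (by omega), ?_⟩
    rw [Dpow_u_le p n E k (m + k) (by omega) (by omega), Nat.add_sub_cancel]
  · exact ⟨0, Submodule.zero_mem _, map_zero _⟩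
  · rintro a b _ _ ⟨xa, hxa, hda⟩ ⟨xb, hxb, hdb⟩
    exact ⟨xa + xb, Submodule.add_mem _ hxa hxb, by rw [map_add, hda, hdb]⟩
  · rintro c a _ ⟨xa, hxa, hda⟩
    exact ⟨c • xa, Submodule.smul_mem _ _ hxa, by rw [map_smul, hda]⟩

lemma Dpow_mapsto [NeZero (p ^ n)] (k ℓ : ℕ) (h : ℓ + k ≤ p ^ n) :
    ∀ x ∈ USpan p n E (ℓ + k), ((Dmap p n E) ^ k) x ∈ USpan p n E ℓ := by
  have hle : USpan p n E (ℓ + k) ≤ (USpan p n E ℓ).comap ((Dmap p n E) ^ k) := by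
    rw [USpan, Submodule.span_le]
    rintro w ⟨m, hm, rfl⟩
    simp only [SetLike.mem_coe, Submodule.mem_comap]
    by_cases hmk : m < k
    · rw [Dpow_u_gt p n E k m hmk (by omega)]; exact Submodule.zero_mem _
    · rw [Dpow_u_le p n E k m (by omega) (by omega)]
      exact u_mem_USpan p n E (m - k) ℓ (by omega)
  exact fun x hx => hle hx

lemma Dpow_ker_of_mem [NeZero (p ^ n)] (k : ℕ) (hk : k ≤ p ^ n) :
    ∀ x ∈ USpan p n E k, ((Dmap p n E) ^ k) x = 0 := by
  have hle : USpan p n E k ≤ LinearMap.ker ((Dmap p n E) ^ k) := by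
    rw [USpan, Submodule.span_le]
    rintro w ⟨m, hm, rfl⟩
    simp only [SetLike.mem_coe, LinearMap.mem_ker]
    exact Dpow_u_gt p n E k m hm (by omega)
  exact fun x hx => LinearMap.mem_ker.mp (hle hx)

end Aux

/-- If `0 ≤ k + ℓ ≤ p^n`, then `Δ^k` restricts to a surjection from `V_{ℓ+k,n}` onto
`V_{ℓ,n}` with kernel `V_{k,n}`; moreover `Δ^k(x) ∈ V_{ℓ,n}` iff `x ∈ V_{ℓ+k,n}`. -/
theorem delta_pow_exact (p n : ℕ) [Fact p.Prime] (hn : 1 ≤ n)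
    (E : Type*) [Field E] [CharP E p] (k ℓ : ℕ) (h : k + ℓ ≤ p ^ n) :
    (∀ x : ZMod (p ^ n) → E,
        (delta p n E)^[k] x ∈ VSpan p n E ℓ ↔ x ∈ VSpan p n E (ℓ + k)) ∧
    (∀ y ∈ VSpan p n E ℓ, ∃ x ∈ VSpan p n E (ℓ + k), (delta p n E)^[k] x = y) ∧
    (∀ x ∈ VSpan p n E (ℓ + k),
        ((delta p n E)^[k] x = 0 ↔ x ∈ VSpan p n E k)) := by
  haveI : NeZero (p ^ n) := ⟨pow_ne_zero n (Fact.out (p := p.Prime)).pos.ne'⟩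
  have hVUℓ : VSpan p n E ℓ = USpan p n E ℓ := (USpan_eq_VSpan p n E ℓ (by omega)).symm
  have hVUk : VSpan p n E k = USpan p n E k := (USpan_eq_VSpan p n E k (by omega)).symm
  have hVUlk : VSpan p n E (ℓ + k) = USpan p n E (ℓ + k) :=
    (USpan_eq_VSpan p n E (ℓ + k) (by omega)).symm
  refine ⟨?_, ?_, ?_⟩
  · intro x
    rw [hVUℓ, hVUlk, iterate_delta_eq]
    constructor
    · intro hx
      obtain ⟨x', hx', hdx'⟩ := Dpow_surj p n E k ℓ (by omega) _ hx
      have h4 : ((Dmap p n E) ^ k) (x - x') = 0 := by rw [map_sub, hdx', sub_self]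
      have h5 : x - x' ∈ USpan p n E k := delta_pow_ker p n E k (by omega) _ h4
      have h6 : x = (x - x') + x' := by abel
      rw [h6]
      exact Submodule.add_mem _ (USpan_mono p n E k (ℓ + k) (by omega) h5) hx'
    · intro hx
      exact Dpow_mapsto p n E k ℓ (by omega) x hx
  · intro y hy
    rw [hVUℓ] at hy
    obtain ⟨x, hx, hdx⟩ := Dpow_surj p n E k ℓ (by omega) y hy
    exact ⟨x, by rw [hVUlk]; exact hx, by rw [iterate_delta_eq]; exact hdx⟩
  · intro x hx
    rw [iterate_delta_eq, hVUk]
    constructor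
    · intro h0
      exact delta_pow_ker p n E k (by omega) x h0
    · intro hxk
      exact Dpow_ker_of_mem p n E k (by omega) x hxk
end

section
/- The operator Δ on V_n is nilpotent of index exactly p^n, and the only subspaces of V_n stable under Δ are the spaces ker(Δ^k) = V_{k,n} for 0 ≤ k ≤ p^n. -/
section Aux
variable (p n : ℕ) (E : Type*) [Field E]

def shiftL : (ZMod (p ^ n) → E) →ₗ[E] (ZMod (p ^ n) → E) where
  toFun x := fun j => x (j - 1)
  map_add' x y := rfl
  map_smul' c x := rfl

def deltaL : (ZMod (p ^ n) → E) →ₗ[E] (ZMod (p ^ n) → E) := shiftL p n E - LinearMap.id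

lemma deltaL_apply (x : ZMod (p ^ n) → E) (j : ZMod (p ^ n)) :
    deltaL p n E x j = x (j - 1) - x j := rfl

lemma delta_eq : delta p n E = ⇑(deltaL p n E) := rfl

lemma iterate_eq (k : ℕ) (x : ZMod (p ^ n) → E) :
    (delta p n E)^[k] x = ((deltaL p n E) ^ k) x := by
  rw [delta_eq, ← Module.End.pow_apply]

lemma shiftL_pow (m : ℕ) (x : ZMod (p ^ n) → E) (j : ZMod (p ^ n)) :
    ((shiftL p n E) ^ m) x j = x (j - (m : ZMod (p ^ n))) := by
  induction m generalizing x j with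
  | zero => simp
  | succ m ih =>
    rw [pow_succ, Module.End.mul_apply, ih]
    show x (j - (m : ZMod (p^n)) - 1) = _
    push_cast
    rw [sub_sub]

lemma shiftL_pow_card : (shiftL p n E) ^ (p ^ n) = 1 := by
  apply LinearMap.ext
  intro x
  funext j
  rw [shiftL_pow]
  simp [ZMod.natCast_self]

end Aux

section Char
variable (p n : ℕ) (E : Type*) [Field E] [hp : Fact p.Prime] [CharP E p]

lemma endCharP : CharP (Module.End E (ZMod (p ^ n) → E)) p := by
  constructor
  intro m
  constructor
  · intro h
    have h0 := congrFun (congrArg (fun f : Module.End E (ZMod (p^n) → E) => f (fun _ => (1:E))) h) 0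
    simp only [Module.End.natCast_apply, LinearMap.zero_apply, Pi.smul_apply, Pi.zero_apply,
      smul_eq_mul, nsmul_eq_mul, mul_one] at h0
    exact (CharP.cast_eq_zero_iff E p m).1 h0
  · intro h
    apply LinearMap.ext
    intro x
    funext j
    have : (m : E) = 0 := (CharP.cast_eq_zero_iff E p m).2 h
    show (m • x) j = (0 : ZMod (p^n) → E) j
    simp [nsmul_eq_mul, this]

lemma deltaL_pow_card : (deltaL p n E) ^ (p ^ n) = 0 := by
  haveI := endCharP p n E
  have : deltaL p n E = shiftL p n E - 1 := rfl
  rw [this, sub_pow_char_pow_of_commute p n (Commute.one_right _), shiftL_pow_card, one_pow,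
    sub_self]

lemma vSeq_pascal (m : ℕ) (hm : m + 1 < p ^ n) (j : ZMod (p ^ n)) :
    vSeq p n E (m + 1) j + vSeq p n E m j = vSeq p n E (m + 1) (j + 1) := by
  haveI : NeZero (p ^ n) := ⟨by omega⟩
  have h1 : (1 : ℕ) < p ^ n := by omega
  haveI : Fact (1 < p ^ n) := ⟨h1⟩
  have hval : (j + 1).val = (j.val + 1) % p ^ n := by
    rw [ZMod.val_add, ZMod.val_one]
  have hjlt : j.val < p ^ n := ZMod.val_lt j
  unfold vSeq
  rcases Nat.lt_or_ge (j.val + 1) (p ^ n) with hc | hc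
  · rw [hval, Nat.mod_eq_of_lt hc, Nat.choose_succ_succ]
    push_cast
    ring
  · have he : j.val + 1 = p ^ n := by omega
    have key : ∀ a : ℕ, a + 1 = p ^ n → a.choose (m + 1) + a.choose m = (p ^ n).choose (m + 1) := by
      intro a hA
      rw [← hA, Nat.choose_succ_succ, Nat.add_comm]
    have hsum := key j.val he
    rw [hval, he, Nat.mod_self]
    rw [← Nat.cast_add, hsum]
    have hz : ((p ^ n).choose (m + 1) : E) = 0 :=
      (CharP.cast_eq_zero_iff E p _).2
        (hp.out.dvd_choose_pow (Nat.succ_ne_zero m) (by omega))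
    rw [hz]
    simp

end Char

section Span
variable (p n : ℕ) (E : Type*) [Field E] [hp : Fact p.Prime] [CharP E p]

lemma VSpan_mono {k k' : ℕ} (h : k ≤ k') : VSpan p n E k ≤ VSpan p n E k' :=
  Submodule.span_mono (by rintro w ⟨ℓ, hl, rfl⟩; exact ⟨ℓ, lt_of_lt_of_le hl h, rfl⟩)

lemma vSeq_mem {ℓ k : ℕ} (h : ℓ < k) : vSeq p n E ℓ ∈ VSpan p n E k :=
  Submodule.subset_span ⟨ℓ, h, rfl⟩

lemma VSpan_zero : VSpan p n E 0 = ⊥ :=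
  Submodule.span_eq_bot.2 (by rintro w ⟨ℓ, hl, rfl⟩; omega)

lemma deltaL_vSeq_zero : deltaL p n E (vSeq p n E 0) = 0 := by
  funext j
  simp [deltaL_apply, vSeq]

lemma deltaL_vSeq_succ (m : ℕ) (hm : m + 1 < p ^ n) :
    deltaL p n E (vSeq p n E (m + 1)) =
      -(deltaL p n E (vSeq p n E m) + vSeq p n E m) := by
  funext j
  have h := vSeq_pascal p n E m hm (j - 1)
  rw [sub_add_cancel] at h
  simp only [deltaL_apply, Pi.neg_apply, Pi.add_apply]
  linear_combination h

lemma deltaL_vSeq_mem (m : ℕ) (hm : m < p ^ n) :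
    deltaL p n E (vSeq p n E m) ∈ VSpan p n E m := by
  induction m with
  | zero => rw [deltaL_vSeq_zero]; exact Submodule.zero_mem _
  | succ m ih =>
    rw [deltaL_vSeq_succ p n E m hm]
    exact Submodule.neg_mem _ (Submodule.add_mem _
      (VSpan_mono p n E (Nat.le_succ m) (ih (by omega))) (vSeq_mem p n E (Nat.lt_succ_self m)))

lemma deltaL_VSpan {k : ℕ} (hk : k ≤ p ^ n) :
    VSpan p n E k ≤ (VSpan p n E (k - 1)).comap (deltaL p n E) := by
  rw [VSpan, Submodule.span_le]
  rintro w ⟨ℓ, hl, rfl⟩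
  exact VSpan_mono p n E (by omega) (deltaL_vSeq_mem p n E ℓ (by omega))

lemma pow_zero_of_mem : ∀ k, k ≤ p ^ n → ∀ x ∈ VSpan p n E k, ((deltaL p n E) ^ k) x = 0 := by
  intro k
  induction k with
  | zero =>
    intro _ x hx
    rw [VSpan_zero] at hx
    simpa using hx
  | succ k ih =>
    intro hk x hx
    rw [pow_succ, Module.End.mul_apply]
    exact ih (by omega) _ (deltaL_VSpan p n E hk hx)

lemma span_le_map {k : ℕ} (hk : k + 1 ≤ p ^ n) :
    VSpan p n E k ≤ (VSpan p n E (k + 1)).map (deltaL p n E) := by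
  rw [VSpan, Submodule.span_le]
  rintro w ⟨ℓ, hl, rfl⟩
  refine ⟨-(vSeq p n E (ℓ + 1) + vSeq p n E ℓ), Submodule.neg_mem _ (Submodule.add_mem _
    (vSeq_mem p n E (by omega)) (vSeq_mem p n E (by omega))), ?_⟩
  rw [map_neg, map_add, deltaL_vSeq_succ p n E ℓ (by omega)]
  abel

lemma eq_const_of_deltaL_eq_zero {x : ZMod (p ^ n) → E} (hx : deltaL p n E x = 0) :
    x = x 0 • vSeq p n E 0 := by
  haveI : NeZero (p ^ n) := ⟨(pow_pos hp.out.pos n).ne'⟩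
  have hstep : ∀ j : ZMod (p ^ n), x (j - 1) = x j := by
    intro j
    have := congrFun hx j
    rw [deltaL_apply] at this
    have := sub_eq_zero.1 this
    exact this
  have hiter : ∀ m : ℕ, ∀ j : ZMod (p ^ n), x (j - (m : ZMod (p ^ n))) = x j := by
    intro m
    induction m with
    | zero => simp
    | succ m ih =>
      intro j
      have : j - ((m : ZMod (p ^ n)) + 1) = (j - (m : ZMod (p ^ n))) - 1 := by ring
      push_cast
      rw [this, hstep, ih]
  funext j
  have h0 : x (j - (j.val : ZMod (p ^ n))) = x j := hiter j.val j
  rw [ZMod.natCast_val, ZMod.cast_id, sub_self] at h0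
  have : vSeq p n E 0 j = 1 := by simp [vSeq]
  rw [Pi.smul_apply, this, smul_eq_mul, mul_one, ← h0]

end Span

section Main
variable (p n : ℕ) (E : Type*) [Field E] [hp : Fact p.Prime] [CharP E p]

lemma ker_le_span : ∀ k, k ≤ p ^ n → ∀ x : ZMod (p ^ n) → E,
    ((deltaL p n E) ^ k) x = 0 → x ∈ VSpan p n E k := by
  intro k
  induction k with
  | zero =>
    intro _ x hx
    rw [pow_zero, Module.End.one_apply] at hx
    rw [hx]
    exact Submodule.zero_mem _
  | succ k ih =>
    intro hk x hx
    rw [pow_succ, Module.End.mul_apply] at hx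
    have hdx : deltaL p n E x ∈ VSpan p n E k := ih (by omega) _ hx
    obtain ⟨y, hy, hdy⟩ := span_le_map p n E hk hdx
    have hz : deltaL p n E (x - y) = 0 := by rw [map_sub, hdy, sub_self]
    have hc := eq_const_of_deltaL_eq_zero p n E hz
    have hxy : x - y ∈ VSpan p n E (k + 1) := by
      rw [hc]
      exact Submodule.smul_mem _ _ (vSeq_mem p n E (Nat.succ_pos k))
    have := Submodule.add_mem _ hy hxy
    rwa [add_sub_cancel] at this

lemma pow_vSeq : ∀ ℓ, ℓ < p ^ n →
    ((deltaL p n E) ^ ℓ) (vSeq p n E ℓ) = ((-1 : E) ^ ℓ) • vSeq p n E 0 := by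
  intro ℓ
  induction ℓ with
  | zero => intro _; simp
  | succ ℓ ih =>
    intro hl
    rw [pow_succ, Module.End.mul_apply, deltaL_vSeq_succ p n E ℓ hl, map_neg, map_add,
      pow_zero_of_mem p n E ℓ (by omega) _ (deltaL_vSeq_mem p n E ℓ (by omega)),
      ih (by omega)]
    rw [zero_add, pow_succ]
    module

lemma stable_claim (W : Submodule E (ZMod (p ^ n) → E))
    (hW : ∀ x ∈ W, deltaL p n E x ∈ W) :
    ∀ k, k < p ^ n → ∀ x ∈ W, ((deltaL p n E) ^ (k + 1)) x = 0 →
      ((deltaL p n E) ^ k) x ≠ 0 → VSpan p n E (k + 1) ≤ W := by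
  intro k
  induction k with
  | zero =>
    intro _ x hx h1 h2
    rw [pow_one] at h1
    rw [pow_zero, Module.End.one_apply] at h2
    have hc := eq_const_of_deltaL_eq_zero p n E h1
    have hx0 : x 0 ≠ 0 := by
      intro h
      rw [h, zero_smul] at hc
      exact h2 hc
    have hv : vSeq p n E 0 ∈ W := by
      have : (x 0)⁻¹ • x = vSeq p n E 0 := by
        nth_rewrite 2 [hc]
        rw [smul_smul, inv_mul_cancel₀ hx0, one_smul]
      rw [← this]
      exact Submodule.smul_mem _ _ hx
    rw [VSpan, Submodule.span_le]
    rintro w ⟨ℓ, hl, rfl⟩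
    have : ℓ = 0 := by omega
    rw [this]
    exact hv
  | succ k ih =>
    intro hk x hx h1 h2
    have hWk : VSpan p n E (k + 1) ≤ W := by
      refine ih (by omega) (deltaL p n E x) (hW x hx) ?_ ?_
      · rw [← Module.End.mul_apply, ← pow_succ]
        exact h1
      · rw [← Module.End.mul_apply, ← pow_succ]
        exact h2
    -- decompose x
    have hxspan : x ∈ VSpan p n E (k + 2) := ker_le_span p n E (k + 2) (by omega) x h1
    have hdec : VSpan p n E (k + 2) ≤ VSpan p n E (k + 1) ⊔ Submodule.span E {vSeq p n E (k + 1)} := by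
      rw [VSpan, Submodule.span_le]
      rintro w ⟨ℓ, hl, rfl⟩
      rcases Nat.lt_or_ge ℓ (k + 1) with h | h
      · exact Submodule.mem_sup_left (vSeq_mem p n E h)
      · have : ℓ = k + 1 := by omega
        rw [this]
        exact Submodule.mem_sup_right (Submodule.mem_span_singleton_self _)
    obtain ⟨y, hy, z, hz, hxyz⟩ := Submodule.mem_sup.1 (hdec hxspan)
    obtain ⟨c, rfl⟩ := Submodule.mem_span_singleton.1 hz
    have hc0 : c ≠ 0 := by
      rintro rfl
      rw [zero_smul, add_zero] at hxyz
      apply h2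
      rw [← hxyz]
      exact pow_zero_of_mem p n E (k + 1) (by omega) y hy
    have hvW : vSeq p n E (k + 1) ∈ W := by
      have : vSeq p n E (k + 1) = c⁻¹ • (x - y) := by
        rw [← hxyz, add_sub_cancel_left, smul_smul, inv_mul_cancel₀ hc0, one_smul]
      rw [this]
      exact Submodule.smul_mem _ _ (Submodule.sub_mem _ hx (hWk hy))
    rw [VSpan, Submodule.span_le]
    rintro w ⟨ℓ, hl, rfl⟩
    rcases Nat.lt_or_ge ℓ (k + 1) with h | h
    · exact hWk (vSeq_mem p n E h)
    · have : ℓ = k + 1 := by omega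
      rw [this]
      exact hvW

end Main

/-- `Δ` is nilpotent of index exactly `p^n`; its iterated kernels are
`ker(Δ^k) = V_{k,n}`, and the subspaces of `V_n` stable under `Δ` are exactly
the `V_{k,n}` for `0 ≤ k ≤ p^n`. -/
theorem delta_nilpotent_stable_subspaces (p n : ℕ) [Fact p.Prime] (hn : 1 ≤ n)
    (E : Type*) [Field E] [CharP E p] :
    (∀ x : ZMod (p ^ n) → E, (delta p n E)^[p ^ n] x = 0) ∧
    (∃ x : ZMod (p ^ n) → E, (delta p n E)^[p ^ n - 1] x ≠ 0) ∧
    (∀ k ≤ p ^ n, ∀ x : ZMod (p ^ n) → E,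
        ((delta p n E)^[k] x = 0 ↔ x ∈ VSpan p n E k)) ∧
    (∀ W : Submodule E (ZMod (p ^ n) → E),
        (∀ x ∈ W, delta p n E x ∈ W) ↔ ∃ k ≤ p ^ n, W = VSpan p n E k) := by
  have hp2 : 2 ≤ p := (Fact.out : p.Prime).two_le
  have hq1 : 1 < p ^ n := by
    calc 1 < p := by omega
    _ = p ^ 1 := (pow_one p).symm
    _ ≤ p ^ n := Nat.pow_le_pow_right (by omega) hn
  have hnil := deltaL_pow_card p n E
  have hzero : ∀ x : ZMod (p ^ n) → E, (delta p n E)^[p ^ n] x = 0 := by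
    intro x
    rw [iterate_eq, hnil]
    rfl
  refine ⟨hzero, ?_, ?_, ?_⟩
  · refine ⟨vSeq p n E (p ^ n - 1), ?_⟩
    rw [iterate_eq, pow_vSeq p n E (p ^ n - 1) (by omega)]
    intro h
    have h0 := congrFun h 0
    rw [Pi.smul_apply, Pi.zero_apply, smul_eq_mul] at h0
    have hv : vSeq p n E 0 0 = 1 := by simp [vSeq]
    rw [hv, mul_one] at h0
    exact pow_ne_zero _ (neg_ne_zero.2 one_ne_zero) h0
  · intro k hk x
    constructor
    · intro h
      exact ker_le_span p n E k hk x (by rw [← iterate_eq]; exact h)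
    · intro h
      rw [iterate_eq]
      exact pow_zero_of_mem p n E k hk x h
  · intro W
    constructor
    · intro hW
      classical
      have hPq : ∀ x ∈ W, ((deltaL p n E) ^ (p ^ n)) x = 0 := fun x _ => by rw [hnil]; rfl
      have hex : ∃ k, ∀ x ∈ W, ((deltaL p n E) ^ k) x = 0 := ⟨p ^ n, hPq⟩
      have hfle : Nat.find hex ≤ p ^ n := Nat.find_le hPq
      refine ⟨Nat.find hex, hfle, ?_⟩
      apply le_antisymm
      · intro x hx
        exact ker_le_span p n E _ hfle x (Nat.find_spec hex x hx)
      · rcases Nat.eq_zero_or_pos (Nat.find hex) with h0 | hpos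
        · rw [h0, VSpan_zero]
          exact bot_le
        · obtain ⟨k', hk'⟩ : ∃ k', Nat.find hex = k' + 1 := ⟨Nat.find hex - 1, by omega⟩
          rw [hk']
          have hmin := Nat.find_min hex (m := k') (by omega)
          push_neg at hmin
          obtain ⟨x, hxW, hxne⟩ := hmin
          exact stable_claim p n E W hW k' (by omega) x hxW
            (by rw [← hk']; exact Nat.find_spec hex x hxW) hxne
    · rintro ⟨k, hk, rfl⟩ x hx
      exact VSpan_mono p n E (Nat.sub_le k 1) (deltaL_VSpan p n E hk hx)
end

section
/- For a ∈ Z_p (equivalently a ∈ Z/p^nZ), let μ_a: V_n → V_n be defined by (μ_a x)_j = x_{aj}. Then μ_a(v_{k,n}) - a^k v_{k,n} ∈ V_{k,n} for all 0 ≤ k ≤ p^n - 1; in particular each V_{k+1,n} is stable under μ_a. -/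
open Polynomial

section Aux

variable (p n : ℕ) (E : Type*) [Field E]

/-- The forward difference operator `(Dop x)_j = x_{j+1} - x_j` as a linear endomorphism. -/
def Dop : Module.End E (ZMod (p ^ n) → E) where
  toFun x := fun j => x (j + 1) - x j
  map_add' x y := by funext j; simp [Pi.add_apply]; ring
  map_smul' c x := by funext j; simp [Pi.smul_apply, smul_eq_mul]; ring

@[simp] lemma Dop_apply (x : ZMod (p ^ n) → E) (j : ZMod (p ^ n)) :
    Dop p n E x j = x (j + 1) - x j := rfl

/-- The operator `μ_a`. -/
def Muop (a : ZMod (p ^ n)) : Module.End E (ZMod (p ^ n) → E) where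
  toFun x := fun j => x (a * j)
  map_add' x y := rfl
  map_smul' c x := rfl

@[simp] lemma Muop_apply (a : ZMod (p ^ n)) (x : ZMod (p ^ n) → E) (j : ZMod (p ^ n)) :
    Muop p n E a x j = x (a * j) := rfl

lemma shift_pow_apply (m : ℕ) (x : ZMod (p ^ n) → E) (j : ZMod (p ^ n)) :
    ((Dop p n E + 1) ^ m) x j = x (j + m) := by
  induction m generalizing j with
  | zero => simp
  | succ m ih =>
    rw [pow_succ']
    have : ((Dop p n E + 1) * (Dop p n E + 1) ^ m) x j
        = ((Dop p n E + 1) ^ m) x (j + 1) - ((Dop p n E + 1) ^ m) x j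
          + ((Dop p n E + 1) ^ m) x j := by
      simp [Module.End.mul_apply]
    rw [this]
    rw [sub_add_cancel, ih]
    push_cast
    ring_nf

end Aux

section Main

variable (p n : ℕ) [Fact p.Prime] (E : Type*) [Field E] [CharP E p]

lemma hppos : 0 < p ^ n := pow_pos (Fact.out (p := p.Prime)).pos n

instance : NeZero (p ^ n) := ⟨(hppos p n).ne'⟩

lemma choose_pow_sub_one_s10 {ℓ : ℕ} (hℓ : ℓ < p ^ n) :
    (((p ^ n - 1).choose ℓ : ℕ) : E) = (-1 : E) ^ ℓ := by
  induction ℓ with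
  | zero => simp
  | succ ℓ ih =>
    have hdvd : p ∣ (p ^ n).choose (ℓ + 1) :=
      (Fact.out (p := p.Prime)).dvd_choose_pow (Nat.succ_ne_zero ℓ) (Nat.ne_of_lt hℓ)
    have hz : (((p ^ n).choose (ℓ + 1) : ℕ) : E) = 0 :=
      (CharP.cast_eq_zero_iff E p _).mpr hdvd
    have hpas : (p ^ n).choose (ℓ + 1)
        = (p ^ n - 1).choose ℓ + (p ^ n - 1).choose (ℓ + 1) := by
      have h1 : p ^ n = (p ^ n - 1) + 1 := (Nat.succ_pred_eq_of_pos (hppos p n)).symm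
      rw [h1]
      exact Nat.choose_succ_succ _ _
    have := ih (lt_trans (Nat.lt_succ_self ℓ) hℓ)
    have hsum : ((p ^ n - 1).choose ℓ : E) + ((p ^ n - 1).choose (ℓ + 1) : E) = 0 := by
      rw [← Nat.cast_add, ← hpas, hz]
    rw [this] at hsum
    rw [pow_succ]
    linear_combination hsum

lemma vSeq_zero : vSeq p n E 0 = fun _ => 1 := by
  funext j; simp [vSeq]

lemma Dop_vSeq_zero : Dop p n E (vSeq p n E 0) = 0 := by
  funext j; simp [vSeq_zero]

lemma Dop_vSeq {ℓ : ℕ} (h : ℓ + 1 ≤ p ^ n - 1) :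
    Dop p n E (vSeq p n E (ℓ + 1)) = vSeq p n E ℓ := by
  have hN : 0 < p ^ n := hppos p n
  funext j
  have hj : j.val < p ^ n := ZMod.val_lt j
  by_cases hc : j.val = p ^ n - 1
  · -- wrap-around case
    have hj1 : j + 1 = 0 := by
      have hj' : j = ((j.val : ℕ) : ZMod (p ^ n)) := by
        rw [ZMod.natCast_val, ZMod.cast_id]
      have h2 : ((p ^ n - 1 + 1 : ℕ) : ZMod (p ^ n))
          = ((p ^ n - 1 : ℕ) : ZMod (p ^ n)) + 1 := by
        rw [Nat.cast_add, Nat.cast_one]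
      rw [hj', hc, ← h2, Nat.sub_add_cancel hN, ZMod.natCast_self]
    simp only [Dop_apply, vSeq, hj1, hc]
    rw [ZMod.val_zero]
    rw [Nat.choose_eq_zero_of_lt (Nat.succ_pos ℓ)]
    rw [choose_pow_sub_one_s10 p n E (by omega), choose_pow_sub_one_s10 p n E (by omega)]
    rw [pow_succ]
    ring
  · -- generic case
    have hlt : j.val + 1 < p ^ n := by omega
    have h2 : 1 < p ^ n := by omega
    haveI : Fact (1 < p ^ n) := ⟨h2⟩
    have hval : (j + 1).val = j.val + 1 := by
      rw [ZMod.val_add_of_lt (by rw [ZMod.val_one]; omega), ZMod.val_one]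
    simp only [Dop_apply, vSeq, hval]
    rw [Nat.choose_succ_succ]
    push_cast
    ring

lemma Dop_pow_vSeq {i ℓ : ℕ} (hℓ : ℓ ≤ p ^ n - 1) (hi : i ≤ ℓ) :
    (Dop p n E ^ i) (vSeq p n E ℓ) = vSeq p n E (ℓ - i) := by
  induction i with
  | zero => simp
  | succ i ih =>
    have hi' : i ≤ ℓ := by omega
    obtain ⟨m, hm⟩ : ∃ m, ℓ - i = m + 1 := ⟨ℓ - i - 1, by omega⟩
    have hm1 : m + 1 ≤ p ^ n - 1 := by omega
    have hm2 : ℓ - (i + 1) = m := by omega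
    rw [pow_succ', Module.End.mul_apply, ih hi', hm, hm2, Dop_vSeq p n E hm1]

lemma Dop_pow_succ_vSeq {k : ℕ} (hk : k ≤ p ^ n - 1) :
    (Dop p n E ^ (k + 1)) (vSeq p n E k) = 0 := by
  rw [pow_succ', Module.End.mul_apply, Dop_pow_vSeq p n E hk le_rfl]
  simp [Dop_vSeq_zero]

lemma VSpan_le_ker {k : ℕ} (hk : k ≤ p ^ n) :
    VSpan p n E k ≤ LinearMap.ker (Dop p n E ^ k) := by
  rw [VSpan, Submodule.span_le]
  rintro w ⟨ℓ, hℓ, rfl⟩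
  rw [SetLike.mem_coe, LinearMap.mem_ker]
  have hsplit : k = (k - (ℓ + 1)) + (ℓ + 1) := by omega
  rw [hsplit, pow_add, Module.End.mul_apply,
    Dop_pow_succ_vSeq p n E (by have := hppos p n; omega)]
  simp

lemma ker_Dop_le : LinearMap.ker (Dop p n E) ≤ VSpan p n E 1 := by
  intro x hx
  rw [LinearMap.mem_ker] at hx
  have hstep : ∀ j : ZMod (p ^ n), x (j + 1) = x j := by
    intro j
    have := congrFun hx j
    simp only [Dop_apply, Pi.zero_apply] at this
    exact sub_eq_zero.mp this
  have hnat : ∀ m : ℕ, x ((m : ZMod (p ^ n))) = x 0 := by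
    intro m
    induction m with
    | zero => simp
    | succ m ih => push_cast; rw [hstep, ih]
  have hconst : x = (x 0) • vSeq p n E 0 := by
    funext j
    have : x j = x 0 := by
      have hj : j = ((j.val : ℕ) : ZMod (p ^ n)) := by
        rw [ZMod.natCast_val, ZMod.cast_id]
      rw [hj]; exact hnat _
    rw [this, vSeq_zero]
    simp
  rw [hconst]
  exact Submodule.smul_mem _ _ (Submodule.subset_span ⟨0, Nat.zero_lt_one, rfl⟩)

lemma ker_le_VSpan : ∀ k ≤ p ^ n, LinearMap.ker (Dop p n E ^ k) ≤ VSpan p n E k := by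
  intro k
  induction k with
  | zero =>
    intro _ x hx
    rw [LinearMap.mem_ker, pow_zero, Module.End.one_apply] at hx
    rw [hx]; exact Submodule.zero_mem _
  | succ k ih =>
    intro hk x hx
    have hN : 0 < p ^ n := hppos p n
    rw [LinearMap.mem_ker, pow_succ, Module.End.mul_apply] at hx
    have hDx : Dop p n E x ∈ VSpan p n E k := ih (by omega) (LinearMap.mem_ker.mpr hx)
    have hmap : VSpan p n E k ≤ Submodule.map (Dop p n E) (VSpan p n E (k + 1)) := by
      rw [VSpan, Submodule.span_le]
      rintro w ⟨ℓ, hℓ, rfl⟩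
      refine ⟨vSeq p n E (ℓ + 1), Submodule.subset_span ⟨ℓ + 1, by omega, rfl⟩, ?_⟩
      exact Dop_vSeq p n E (by omega)
    obtain ⟨z, hz, hzx⟩ := hmap hDx
    have hdiff : x - z ∈ VSpan p n E 1 := by
      apply ker_Dop_le p n E
      rw [LinearMap.mem_ker, map_sub, hzx, sub_self]
    have h1le : VSpan p n E 1 ≤ VSpan p n E (k + 1) :=
      Submodule.span_mono (fun w ⟨ℓ, hℓ, hw⟩ => ⟨ℓ, by omega, hw⟩)
    have : x = (x - z) + z := by ring
    rw [this]
    exact Submodule.add_mem _ (h1le hdiff) hz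

-- commutation with μ_a
lemma Dop_mul_Muop (a : ZMod (p ^ n)) :
    Dop p n E * Muop p n E a
      = Muop p n E a * aeval (Dop p n E) ((X + 1) ^ a.val - 1 : E[X]) := by
  have hcast : ((a.val : ℕ) : ZMod (p ^ n)) = a := by
    rw [ZMod.natCast_val, ZMod.cast_id]
  refine LinearMap.ext fun x => funext fun j => ?_
  simp only [Module.End.mul_apply, Muop_apply, Dop_apply]
  rw [map_sub, map_pow, map_add, aeval_X, map_one]
  simp only [LinearMap.sub_apply, Module.End.one_apply, Pi.sub_apply]
  rw [shift_pow_apply, hcast]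
  ring_nf

lemma Dop_pow_mul_Muop (a : ZMod (p ^ n)) (k : ℕ) :
    Dop p n E ^ k * Muop p n E a
      = Muop p n E a * aeval (Dop p n E) (((X + 1) ^ a.val - 1 : E[X]) ^ k) := by
  induction k with
  | zero => simp
  | succ k ih =>
    rw [pow_succ', mul_assoc, ih, ← mul_assoc, Dop_mul_Muop, mul_assoc, ← map_mul,
      ← pow_succ']

lemma poly_coeff_zero (a : ZMod (p ^ n)) :
    ((X + 1) ^ a.val - 1 : E[X]).coeff 0 = 0 := by
  rw [coeff_sub, coeff_X_add_one_pow, Nat.choose_zero_right]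
  simp

lemma poly_decomp (a : ZMod (p ^ n)) :
    ∃ R : E[X], ((X + 1) ^ a.val - 1 : E[X])
      = C ((a.val : E)) * X + X ^ 2 * R := by
  have hdvd : (X : E[X]) ^ 2 ∣ ((X + 1) ^ a.val - 1 - C ((a.val : E)) * X) := by
    rw [X_pow_dvd_iff]
    intro d hd
    interval_cases d
    · simp [coeff_sub, coeff_X_add_one_pow, coeff_C_mul, coeff_one]
    · simp [coeff_sub, coeff_X_add_one_pow, coeff_C_mul, coeff_one]
  obtain ⟨R, hR⟩ := hdvd
  exact ⟨R, by linear_combination hR⟩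

lemma poly_pow_decomp (a : ZMod (p ^ n)) (k : ℕ) :
    ∃ Q : E[X], (((X + 1) ^ a.val - 1 : E[X])) ^ k
      = C ((a.val : E) ^ k) * X ^ k + X ^ (k + 1) * Q := by
  obtain ⟨R, hR⟩ := poly_decomp p n E a
  induction k with
  | zero => exact ⟨0, by simp⟩
  | succ k ih =>
    obtain ⟨Q, hQ⟩ := ih
    refine ⟨C ((a.val : E)) * Q + C ((a.val : E) ^ k) * R + X * (R * Q), ?_⟩
    have hC : (C ((a.val : E) ^ (k + 1)) : E[X])
        = C ((a.val : E) ^ k) * C ((a.val : E)) := by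
      rw [pow_succ, map_mul]
    rw [hC, pow_succ, hQ, hR]
    ring

end Main

/-- For `a ∈ Z/p^nZ`, the operator `μ_a : (x_j) ↦ (x_{aj})` satisfies
`μ_a(v_{k,n}) - a^k v_{k,n} ∈ V_{k,n}` for `0 ≤ k ≤ p^n - 1`; in particular
each `V_{k+1,n}` is stable under `μ_a`. -/
theorem mu_action (p n : ℕ) [Fact p.Prime] (hn : 1 ≤ n)
    (E : Type*) [Field E] [CharP E p] (a : ZMod (p ^ n)) :
    (∀ k ≤ p ^ n - 1,
        (fun j => vSeq p n E k (a * j)) - ((ZMod.val a : E) ^ k) • vSeq p n E k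
          ∈ VSpan p n E k) ∧
    (∀ k ≤ p ^ n - 1, ∀ x ∈ VSpan p n E (k + 1),
        (fun j => x (a * j)) ∈ VSpan p n E (k + 1)) := by
  have hN : 0 < p ^ n := hppos p n
  constructor
  · intro k hk
    show Muop p n E a (vSeq p n E k) - ((ZMod.val a : E) ^ k) • vSeq p n E k
      ∈ VSpan p n E k
    set v := vSeq p n E k with hv
    apply ker_le_VSpan p n E k (by omega)
    rw [LinearMap.mem_ker, map_sub, map_smul]
    -- compute D^k (Mu a v)
    obtain ⟨Q, hQ⟩ := poly_pow_decomp p n E a k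
    have h1 : (Dop p n E ^ k) (Muop p n E a v)
        = Muop p n E a (aeval (Dop p n E) (((X + 1) ^ a.val - 1 : E[X]) ^ k) v) := by
      have := congrFun (congrArg DFunLike.coe (Dop_pow_mul_Muop p n E a k)) v
      simpa [Module.End.mul_apply] using this
    have h2 : aeval (Dop p n E) (((X + 1) ^ a.val - 1 : E[X]) ^ k) v
        = ((ZMod.val a : E) ^ k) • vSeq p n E 0 := by
      rw [hQ, mul_comm ((X : E[X]) ^ (k + 1)) Q, map_add, map_mul, map_mul,
        LinearMap.add_apply, Module.End.mul_apply, Module.End.mul_apply,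
        aeval_X_pow, aeval_X_pow, aeval_C]
      rw [hv, Dop_pow_vSeq p n E hk le_rfl, Nat.sub_self]
      have h3 : (Dop p n E ^ (k + 1)) (vSeq p n E k) = 0 := Dop_pow_succ_vSeq p n E hk
      rw [h3, map_zero, add_zero, Module.algebraMap_end_apply]
    have h4 : Muop p n E a (((ZMod.val a : E) ^ k) • vSeq p n E 0)
        = ((ZMod.val a : E) ^ k) • vSeq p n E 0 := by
      rw [map_smul]
      congr 1
      funext j
      simp [vSeq_zero]
    have h5 : (Dop p n E ^ k) v = vSeq p n E 0 := by
      rw [hv, Dop_pow_vSeq p n E hk le_rfl, Nat.sub_self]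
    rw [h1, h2, h4, h5, sub_self]
  · intro k hk x hx
    show Muop p n E a x ∈ VSpan p n E (k + 1)
    apply ker_le_VSpan p n E (k + 1) (by omega)
    rw [LinearMap.mem_ker]
    have hx0 : (Dop p n E ^ (k + 1)) x = 0 := by
      have := VSpan_le_ker p n E (k := k + 1) (by omega) hx
      rwa [LinearMap.mem_ker] at this
    obtain ⟨P1, hP1⟩ : (X : E[X]) ∣ ((X + 1) ^ a.val - 1) :=
      X_dvd_iff.mpr (poly_coeff_zero p n E a)
    have h1 : (Dop p n E ^ (k + 1)) (Muop p n E a x)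
        = Muop p n E a (aeval (Dop p n E) (((X + 1) ^ a.val - 1 : E[X]) ^ (k + 1)) x) := by
      have := congrFun (congrArg DFunLike.coe (Dop_pow_mul_Muop p n E a (k + 1))) x
      simpa [Module.End.mul_apply] using this
    have h2 : aeval (Dop p n E) (((X + 1) ^ a.val - 1 : E[X]) ^ (k + 1)) x = 0 := by
      rw [hP1, mul_pow, mul_comm ((X : E[X]) ^ (k + 1)), map_mul,
        Module.End.mul_apply, aeval_X_pow, hx0, map_zero]
    rw [h1, h2, map_zero]
end

section
/- If x ∈ V_{k,n} and 0 ≤ i ≤ p-1, then the sequence y ∈ V_{n-1} defined by y_j = x_{pj+i} belongs to V_{⌊(k-1)/p⌋+1, n-1}. -/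
/-- If `x ∈ V_{k,n}` and `0 ≤ i ≤ p-1`, then the sequence `y ∈ V_{n-1}` given by
`y_j = x_{pj+i}` belongs to `V_{⌊(k-1)/p⌋+1, n-1}`. -/
theorem extract_block (p n : ℕ) [Fact p.Prime] (hn : 2 ≤ n)
    (E : Type*) [Field E] [CharP E p] (k i : ℕ) (hk1 : 1 ≤ k) (hk : k ≤ p ^ n)
    (hi : i ≤ p - 1) (x : ZMod (p ^ n) → E) (hx : x ∈ VSpan p n E k) :
    (fun j : ZMod (p ^ (n - 1)) =>
        x ((p : ZMod (p ^ n)) * (ZMod.val j : ZMod (p ^ n)) + (i : ZMod (p ^ n))))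
      ∈ VSpan p (n - 1) E ((k - 1) / p + 1) := by
  have hp : p.Prime := Fact.out
  have hp0 : 0 < p := hp.pos
  have hip : i < p := lt_of_le_of_lt hi (Nat.sub_lt hp0 one_pos)
  have hpn : p ^ (n - 1) * p = p ^ n := by
    rw [← pow_succ]
    congr 1
    omega
  induction hx using Submodule.span_induction with
  | mem w hw =>
      obtain ⟨ℓ, hℓ, rfl⟩ := hw
      have key : (fun j : ZMod (p ^ (n - 1)) =>
          vSeq p n E ℓ ((p : ZMod (p ^ n)) * (ZMod.val j : ZMod (p ^ n)) + (i : ZMod (p ^ n))))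
          = ((i.choose (ℓ % p) : E)) • vSeq p (n - 1) E (ℓ / p) := by
        funext j
        have hjlt : ZMod.val j < p ^ (n - 1) := ZMod.val_lt j
        have hlt : p * ZMod.val j + i < p ^ n := by
          have h1 : p * ZMod.val j + p ≤ p ^ (n - 1) * p := by
            calc p * ZMod.val j + p = (ZMod.val j + 1) * p := by ring
            _ ≤ p ^ (n - 1) * p := Nat.mul_le_mul_right _ hjlt
          omega
        have hcast : (p : ZMod (p ^ n)) * (ZMod.val j : ZMod (p ^ n)) + (i : ZMod (p ^ n))
            = ((p * ZMod.val j + i : ℕ) : ZMod (p ^ n)) := by push_cast; ring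
        have hval : ZMod.val ((p : ZMod (p ^ n)) * (ZMod.val j : ZMod (p ^ n)) + (i : ZMod (p ^ n)))
            = p * ZMod.val j + i := by
          rw [hcast, ZMod.val_natCast_of_lt hlt]
        simp only [vSeq, Pi.smul_apply, smul_eq_mul, hval]
        have hmod : (p * ZMod.val j + i) % p = i := by
          rw [Nat.mul_add_mod, Nat.mod_eq_of_lt hip]
        have hdiv : (p * ZMod.val j + i) / p = ZMod.val j := by
          rw [Nat.mul_add_div hp0, Nat.div_eq_of_lt hip, Nat.add_zero]
        have := Choose.choose_modEq_choose_mod_mul_choose_div_nat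
          (p := p) (n := p * ZMod.val j + i) (k := ℓ)
        rw [hmod, hdiv] at this
        calc ((Nat.choose (p * ZMod.val j + i) ℓ : ℕ) : E)
            = ((i.choose (ℓ % p) * (ZMod.val j).choose (ℓ / p) : ℕ) : E) :=
              CharP.natCast_eq_natCast' E p this
          _ = (i.choose (ℓ % p) : E) * ((ZMod.val j).choose (ℓ / p) : E) := by push_cast; ring
      rw [key]
      refine Submodule.smul_mem _ _ (Submodule.subset_span ?_)
      exact ⟨ℓ / p, Nat.lt_succ_of_le (Nat.div_le_div_right (by omega)), rfl⟩
  | zero => exact Submodule.zero_mem _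
  | add a b _ _ ha hb => exact Submodule.add_mem _ ha hb
  | smul c a _ ha => exact Submodule.smul_mem _ c ha
end

section
/- Every element of the Borel subgroup B of GL_2(Q_p) can be written uniquely as g_{β,δ}·k with β ∈ A, δ ∈ Z, and k ∈ KZ, where g_{β,δ} = [[1, β],[0, p^δ]]; i.e., B is the disjoint union over β ∈ A and δ ∈ Z of the cosets g_{β,δ}·KZ. -/
/-- The set `A = {α_n p^{-n} + ⋯ + α_1 p^{-1} : 0 ≤ α_j ≤ p-1}`, a system of
representatives of `Q_p/Z_p`. -/
def repSet (p : ℕ) [Fact p.Prime] : Set ℚ_[p] :=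
  {β | ∃ (n : ℕ) (α : ℕ → ℕ), (∀ j, α j < p) ∧
    β = ∑ j ∈ Finset.range n, (α j : ℚ_[p]) * (p : ℚ_[p]) ^ (-(j + 1 : ℤ))}

/-- The set of matrices in `KZ`: products of an element of
`K = B ∩ GL_2(Z_p)` (upper triangular, unit diagonal entries, integral upper
entry) and a scalar matrix `z·Id` with `z ∈ Q_p^×`. -/
def KZMat (p : ℕ) [Fact p.Prime] : Set (Matrix (Fin 2) (Fin 2) ℚ_[p]) :=
  {m | ∃ (z : ℚ_[p]ˣ) (a d : ℤ_[p]ˣ) (b : ℤ_[p]),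
    m = !![(z : ℚ_[p]) * ((a : ℤ_[p]) : ℚ_[p]), (z : ℚ_[p]) * ((b : ℤ_[p]) : ℚ_[p]);
           0, (z : ℚ_[p]) * ((d : ℤ_[p]) : ℚ_[p])]}

section Aux

variable {p : ℕ} [Fact p.Prime]

lemma pQ_ne_zero : (p : ℚ_[p]) ≠ 0 :=
  Nat.cast_ne_zero.mpr (Fact.out : p.Prime).ne_zero

lemma zero_mem_repSet : (0 : ℚ_[p]) ∈ repSet p :=
  ⟨0, fun _ => 0, fun _ => (Fact.out : p.Prime).pos, by simp⟩

lemma repSet_shift {r : ℕ} (hr : r < p) {β : ℚ_[p]} (hβ : β ∈ repSet p) :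
    ((r : ℚ_[p]) + β) * (p : ℚ_[p])⁻¹ ∈ repSet p := by
  obtain ⟨n, α, hα, rfl⟩ := hβ
  refine ⟨n + 1, fun j => if j = 0 then r else α (j - 1), fun j => ?_, ?_⟩
  · dsimp only; split <;> [exact hr; exact hα _]
  · rw [Finset.sum_range_succ']
    simp only [if_pos rfl, Nat.add_sub_cancel, if_neg (Nat.succ_ne_zero _)]
    rw [add_mul, Finset.sum_mul, add_comm]
    congr 1
    · refine Finset.sum_congr rfl fun j _ => ?_
      rw [mul_assoc, ← zpow_neg_one, ← zpow_add₀ pQ_ne_zero]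
      congr 1
    · rw [← zpow_neg_one]
      congr 1

lemma nat_mul_zpow_mem (n : ℕ) : ∀ c : ℕ, c < p ^ n →
    (c : ℚ_[p]) * (p : ℚ_[p]) ^ (-(n : ℤ)) ∈ repSet p := by
  induction n with
  | zero =>
    intro c hc
    have : c = 0 := by simpa using hc
    subst this; simpa using zero_mem_repSet
  | succ n ih =>
    intro c hc
    have hr : c / p ^ n < p := Nat.div_lt_of_lt_mul (by rwa [pow_succ] at hc)
    have h1 : (c : ℚ_[p]) * (p : ℚ_[p]) ^ (-(n + 1 : ℕ) : ℤ)
        = ((c / p ^ n : ℕ) + ((c % p ^ n : ℕ) : ℚ_[p]) * (p : ℚ_[p]) ^ (-(n : ℤ)))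
          * (p : ℚ_[p])⁻¹ := by
      have hc' : ((p ^ n * (c / p ^ n) + c % p ^ n : ℕ) : ℚ_[p]) = (c : ℚ_[p]) := by
        rw [Nat.div_add_mod]
      rw [← hc']
      have hpn : ((p : ℚ_[p]) ^ n) * (p : ℚ_[p]) ^ (-(n : ℤ)) = 1 := by
        rw [← zpow_natCast (p : ℚ_[p]) n, ← zpow_add₀ pQ_ne_zero]; simp
      have he : (-(n + 1 : ℕ) : ℤ) = -(n : ℤ) + (-1) := by push_cast; ring
      rw [he, zpow_add₀ pQ_ne_zero, zpow_neg_one]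
      push_cast
      linear_combination ((c / p ^ n : ℕ) : ℚ_[p]) * (p : ℚ_[p])⁻¹ * hpn
    rw [h1]
    exact repSet_shift hr (ih _ (Nat.mod_lt _ (pow_pos (Fact.out : p.Prime).pos n)))

lemma exists_rep (x : ℚ_[p]) : ∃ β ∈ repSet p, ‖x - β‖ ≤ 1 := by
  by_cases hx1 : ‖x‖ ≤ 1
  · exact ⟨0, zero_mem_repSet, by simpa using hx1⟩
  have hx0 : x ≠ 0 := by rintro rfl; simp at hx1
  set n : ℕ := (-x.valuation).toNat with hn
  have hval : ‖x‖ = (p : ℝ) ^ (-x.valuation) := Padic.norm_eq_zpow_neg_valuation hx0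
  have hvneg : x.valuation < 0 := by
    by_contra h
    push_neg at h
    apply hx1
    rw [hval]
    exact zpow_le_one_of_nonpos₀ (by exact_mod_cast (Fact.out : p.Prime).one_lt.le)
      (by omega)
  have hnn : (n : ℤ) = -x.valuation := Int.toNat_of_nonneg (by omega)
  have hw : ‖x * (p : ℚ_[p]) ^ n‖ ≤ 1 := by
    rw [norm_mul, hval, Padic.norm_p_pow, ← zpow_add₀
      (by exact_mod_cast (Fact.out : p.Prime).ne_zero : (p:ℝ) ≠ 0)]
    rw [show -x.valuation + -(n:ℤ) = 0 by omega]
    norm_num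
  set w : ℤ_[p] := ⟨x * (p : ℚ_[p]) ^ n, hw⟩ with hwdef
  set c : ℕ := w.appr n with hcdef
  have hclt : c < p ^ n := PadicInt.appr_lt w n
  have hspec := PadicInt.appr_spec n w
  rw [Ideal.mem_span_singleton] at hspec
  obtain ⟨y, hy⟩ := hspec
  refine ⟨(c : ℚ_[p]) * (p : ℚ_[p]) ^ (-(n : ℤ)), nat_mul_zpow_mem n c hclt, ?_⟩
  have hxc : x - (c : ℚ_[p]) * (p : ℚ_[p]) ^ (-(n : ℤ))
      = ((w - c : ℤ_[p]) : ℚ_[p]) * (p : ℚ_[p]) ^ (-(n : ℤ)) := by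
    rw [PadicInt.coe_sub, show (w : ℚ_[p]) = x * (p : ℚ_[p]) ^ n from rfl, PadicInt.coe_natCast]
    rw [sub_mul, mul_assoc, ← zpow_natCast (p : ℚ_[p]) n, ← zpow_add₀ pQ_ne_zero]
    simp
  rw [hxc, norm_mul, Padic.norm_p_zpow]
  have hnw : ‖(w - c : ℤ_[p])‖ ≤ (p : ℝ) ^ (-(n : ℤ)) := by
    rw [hy, norm_mul, PadicInt.norm_p_pow]
    exact mul_le_of_le_one_right (by positivity) y.norm_le_one
  calc ‖((w - c : ℤ_[p]) : ℚ_[p])‖ * (p : ℝ) ^ (-(-(n:ℤ)))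
      ≤ (p : ℝ) ^ (-(n:ℤ)) * (p : ℝ) ^ (n:ℤ) := by
        rw [neg_neg]
        apply mul_le_mul_of_nonneg_right _ (by positivity)
        rw [PadicInt.padic_norm_e_of_padicInt]
        exact hnw
    _ = 1 := by
        rw [← zpow_add₀ (by exact_mod_cast (Fact.out : p.Prime).ne_zero : (p:ℝ) ≠ 0)]
        norm_num

lemma hp1R : (1 : ℝ) < (p : ℝ) := by exact_mod_cast (Fact.out : p.Prime).one_lt

lemma digit_sum_eq_zero (n : ℕ) (t : ℕ → ℤ) (ht : ∀ j, (t j).natAbs < p)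
    (h : ‖∑ j ∈ Finset.range n, (t j : ℚ_[p]) * (p : ℚ_[p]) ^ (-(j + 1 : ℤ))‖ ≤ 1) :
    ∑ j ∈ Finset.range n, (t j : ℚ_[p]) * (p : ℚ_[p]) ^ (-(j + 1 : ℤ)) = 0 := by
  induction n with
  | zero => simp
  | succ n ih =>
    rw [Finset.sum_range_succ] at h ⊢
    by_cases htn : t n = 0
    · rw [htn] at h ⊢
      simp only [Int.cast_zero, zero_mul, add_zero] at h ⊢
      exact ih h
    · exfalso
      have hnorm_t : ‖((t n : ℤ) : ℚ_[p])‖ = 1 := by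
        rcases lt_or_eq_of_le (Padic.norm_int_le_one (p := p) (t n)) with hlt | heq
        · exfalso
          rw [Padic.norm_intCast_lt_one_iff] at hlt
          have := Int.le_of_dvd (abs_pos.mpr htn) ((dvd_abs _ _).mpr hlt)
          have := ht n
          have habs : |t n| = ((t n).natAbs : ℤ) := Int.abs_eq_natAbs _
          omega
        · exact heq
      have hterm : ‖((t n : ℤ) : ℚ_[p]) * (p : ℚ_[p]) ^ (-(n + 1 : ℤ))‖
          = (p : ℝ) ^ (n + 1 : ℤ) := by
        rw [norm_mul, hnorm_t, one_mul, Padic.norm_p_zpow, neg_neg]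
      have hS' : ‖∑ j ∈ Finset.range n, (t j : ℚ_[p]) * (p : ℚ_[p]) ^ (-(j + 1 : ℤ))‖
          ≤ (p : ℝ) ^ (n : ℤ) := by
        apply IsUltrametricDist.norm_sum_le_of_forall_le_of_nonneg (by positivity)
        intro j hj
        rw [norm_mul, Padic.norm_p_zpow, neg_neg]
        calc ‖((t j : ℤ) : ℚ_[p])‖ * (p : ℝ) ^ (j + 1 : ℤ)
            ≤ 1 * (p : ℝ) ^ (j + 1 : ℤ) := by
              apply mul_le_mul_of_nonneg_right (Padic.norm_int_le_one _) (by positivity)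
          _ ≤ (p : ℝ) ^ (n : ℤ) := by
              rw [one_mul]
              exact zpow_le_zpow_right₀ hp1R.le (by exact_mod_cast Finset.mem_range.mp hj)
      have hne : ‖∑ j ∈ Finset.range n, (t j : ℚ_[p]) * (p : ℚ_[p]) ^ (-(j + 1 : ℤ))‖
          ≠ ‖((t n : ℤ) : ℚ_[p]) * (p : ℚ_[p]) ^ (-(n + 1 : ℤ))‖ := by
        rw [hterm]
        exact ne_of_lt (lt_of_le_of_lt hS' (zpow_lt_zpow_right₀ hp1R (by omega)))
      rw [IsUltrametricDist.norm_add_eq_max_of_norm_ne_norm hne, hterm] at h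
      have h1 : (1 : ℝ) < (p : ℝ) ^ (n + 1 : ℤ) := one_lt_zpow₀ hp1R (by omega)
      have := le_max_right ‖∑ j ∈ Finset.range n, (t j : ℚ_[p]) * (p : ℚ_[p]) ^ (-(j + 1 : ℤ))‖
        ((p : ℝ) ^ (n + 1 : ℤ))
      linarith

lemma rep_pad {β : ℚ_[p]} (n : ℕ) (α : ℕ → ℕ)
    (hβ : β = ∑ j ∈ Finset.range n, (α j : ℚ_[p]) * (p : ℚ_[p]) ^ (-(j + 1 : ℤ)))
    {m : ℕ} (hm : n ≤ m) :
    β = ∑ j ∈ Finset.range m,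
      ((if j < n then α j else 0 : ℕ) : ℚ_[p]) * (p : ℚ_[p]) ^ (-(j + 1 : ℤ)) := by
  rw [hβ]
  rw [← Finset.sum_subset (Finset.range_subset_range.mpr hm) (fun j _ hj => ?_)]
  · exact Finset.sum_congr rfl fun j hj => by
      rw [if_pos (Finset.mem_range.mp hj)]
  · rw [if_neg (by simpa using hj)]
    simp

lemma rep_unique {β₁ β₂ : ℚ_[p]} (h1 : β₁ ∈ repSet p) (h2 : β₂ ∈ repSet p)
    (h : ‖β₁ - β₂‖ ≤ 1) : β₁ = β₂ := by
  obtain ⟨n₁, α₁, hα₁, hb₁⟩ := h1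
  obtain ⟨n₂, α₂, hα₂, hb₂⟩ := h2
  set m := max n₁ n₂ with hm
  have e₁ := rep_pad n₁ α₁ hb₁ (le_max_left n₁ n₂)
  have e₂ := rep_pad n₂ α₂ hb₂ (le_max_right n₁ n₂)
  set t : ℕ → ℤ := fun j =>
    ((if j < n₁ then α₁ j else 0 : ℕ) : ℤ) - ((if j < n₂ then α₂ j else 0 : ℕ) : ℤ) with htdef
  have hdiff : β₁ - β₂ = ∑ j ∈ Finset.range m, (t j : ℚ_[p]) * (p : ℚ_[p]) ^ (-(j + 1 : ℤ)) := by
    rw [e₁, e₂, ← Finset.sum_sub_distrib]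
    refine Finset.sum_congr rfl fun j _ => ?_
    rw [htdef]
    push_cast
    ring
  have ht : ∀ j, (t j).natAbs < p := by
    intro j
    have h1 := hα₁ j
    have h2 := hα₂ j
    have hp0 := (Fact.out : p.Prime).pos
    rw [htdef]
    dsimp only
    split <;> split <;> omega
  have := digit_sum_eq_zero m t ht (by rw [← hdiff]; exact h)
  rw [← hdiff] at this
  exact sub_eq_zero.mp this


end Aux

/-- Every element of the Borel subgroup `B` of `GL_2(Q_p)` (an invertible upper
triangular matrix) can be written uniquely as `g_{β,δ} · k` with `β ∈ A`, `δ ∈ Z`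
and `k ∈ KZ`, where `g_{β,δ} = [[1, β],[0, p^δ]]`: `B` is the disjoint union of
the cosets `g_{β,δ}·KZ` over `β ∈ A`, `δ ∈ Z`. -/
theorem borel_coset_decomposition (p : ℕ) [Fact p.Prime]
    (M : Matrix (Fin 2) (Fin 2) ℚ_[p])
    (hlow : M 1 0 = 0) (ha : M 0 0 ≠ 0) (hd : M 1 1 ≠ 0) :
    ∃! t : ℚ_[p] × ℤ × Matrix (Fin 2) (Fin 2) ℚ_[p],
      t.1 ∈ repSet p ∧ t.2.2 ∈ KZMat p ∧
        M = !![1, t.1; 0, (p : ℚ_[p]) ^ t.2.1] * t.2.2 := by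
  have hpR0 : (0 : ℝ) < (p : ℝ) := by exact_mod_cast (Fact.out : p.Prime).pos
  have hpRne : (p : ℝ) ≠ 0 := hpR0.ne'
  set v0 : ℤ := (M 0 0).valuation with hv0
  set v1 : ℤ := (M 1 1).valuation with hv1
  set δ₀ : ℤ := v1 - v0 with hδ₀
  have hn0 : ‖M 0 0‖ = (p : ℝ) ^ (-v0) := Padic.norm_eq_zpow_neg_valuation ha
  have hn1 : ‖M 1 1‖ = (p : ℝ) ^ (-v1) := Padic.norm_eq_zpow_neg_valuation hd
  have hpz : (p : ℚ_[p]) ^ δ₀ ≠ 0 := zpow_ne_zero _ pQ_ne_zero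
  set d0 : ℚ_[p] := M 1 1 / (M 0 0 * (p : ℚ_[p]) ^ δ₀) with hd0def
  have hd0 : ‖d0‖ = 1 := by
    rw [hd0def, norm_div, norm_mul, Padic.norm_p_zpow, hn0, hn1,
      ← zpow_add₀ hpRne, ← zpow_sub₀ hpRne,
      show -v1 - (-v0 + -δ₀) = 0 by rw [hδ₀]; ring, zpow_zero]
  have hd0ne : d0 ≠ 0 := by
    intro h; rw [h] at hd0; simp at hd0
  set x₀ : ℚ_[p] := M 0 1 * (p : ℚ_[p]) ^ δ₀ / M 1 1 with hx₀def
  obtain ⟨β₀, hβ₀mem, hβ₀⟩ := exists_rep x₀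
  set b0 : ℚ_[p] := d0 * (x₀ - β₀) with hb0def
  have hb0 : ‖b0‖ ≤ 1 := by rw [hb0def, norm_mul, hd0, one_mul]; exact hβ₀
  set dInt : ℤ_[p] := ⟨d0, le_of_eq hd0⟩ with hdIntdef
  set bInt : ℤ_[p] := ⟨b0, hb0⟩ with hbIntdef
  have hdu : IsUnit dInt := by
    rw [PadicInt.isUnit_iff, PadicInt.norm_def]
    exact hd0
  set k₀ : Matrix (Fin 2) (Fin 2) ℚ_[p] := !![M 0 0, M 0 0 * b0; 0, M 0 0 * d0] with hk₀def
  have hk₀mem : k₀ ∈ KZMat p := by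
    refine ⟨Units.mk0 _ ha, 1, hdu.unit, bInt, ?_⟩
    rw [hk₀def, IsUnit.unit_spec]
    norm_num [hdIntdef, hbIntdef]
  have hcan : M 0 0 * d0 = M 1 1 / (p : ℚ_[p]) ^ δ₀ := by
    rw [hd0def]; field_simp
  have hM₀ : M = !![1, β₀; 0, (p : ℚ_[p]) ^ δ₀] * k₀ := by
    ext i j
    fin_cases i <;> fin_cases j
    · simp [hk₀def, Matrix.mul_apply, Fin.sum_univ_two]
    · simp only [hk₀def, Matrix.mul_apply, Fin.sum_univ_two, Matrix.cons_val', Matrix.cons_val_zero,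
        Matrix.cons_val_one, Matrix.head_cons, Matrix.head_fin_const, Matrix.empty_val',
        Matrix.cons_val_fin_one, Fin.isValue, Fin.zero_eta, Fin.mk_one, Matrix.of_apply]
      rw [hb0def, hx₀def, hd0def]
      field_simp
      ring
    · simp [hk₀def, Matrix.mul_apply, Fin.sum_univ_two, hlow]
    · simp only [hk₀def, Matrix.mul_apply, Fin.sum_univ_two, Matrix.cons_val', Matrix.cons_val_zero,
        Matrix.cons_val_one, Matrix.head_cons, Matrix.head_fin_const, Matrix.empty_val',
        Matrix.cons_val_fin_one, Fin.isValue, Fin.zero_eta, Fin.mk_one, Matrix.of_apply]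
      rw [hd0def]
      field_simp
      ring
  refine ⟨⟨β₀, δ₀, k₀⟩, ⟨hβ₀mem, hk₀mem, hM₀⟩, ?_⟩
  rintro ⟨β, δ, k⟩ ⟨hβ, ⟨z, a, d, b, rfl⟩, hMeq⟩
  have e00 := congrFun (congrFun hMeq 0) 0
  have e01 := congrFun (congrFun hMeq 0) 1
  have e11 := congrFun (congrFun hMeq 1) 1
  simp [Matrix.mul_apply, Fin.sum_univ_two] at e00 e01 e11
  have hnorma : ‖((a : ℤ_[p]) : ℚ_[p])‖ = 1 := by
    rw [PadicInt.padic_norm_e_of_padicInt]; exact PadicInt.norm_units a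
  have hnormd : ‖((d : ℤ_[p]) : ℚ_[p])‖ = 1 := by
    rw [PadicInt.padic_norm_e_of_padicInt]; exact PadicInt.norm_units d
  have hnormb : ‖((b : ℤ_[p]) : ℚ_[p])‖ ≤ 1 := by
    rw [PadicInt.padic_norm_e_of_padicInt]; exact b.norm_le_one
  have hznorm : ‖(z : ℚ_[p])‖ = (p : ℝ) ^ (-v0) := by
    rw [← hn0, e00, norm_mul, hnorma, mul_one]
  have hδeq : δ = δ₀ := by
    have h1 : ‖M 1 1‖ = (p : ℝ) ^ (-δ + -v0) := by
      rw [e11, norm_mul, norm_mul, Padic.norm_p_zpow, hznorm, hnormd, mul_one,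
        zpow_add₀ hpRne]
    rw [hn1] at h1
    have := zpow_right_injective₀ hpR0 hp1R.ne' h1
    omega
  subst hδeq
  have hzd : (z : ℚ_[p]) * ((d : ℤ_[p]) : ℚ_[p]) = M 1 1 / (p : ℚ_[p]) ^ δ₀ := by
    rw [e11]; field_simp
  have hsub : (β - β₀) * (M 1 1 / (p : ℚ_[p]) ^ δ₀) = M 0 0 * b0 - (z : ℚ_[p]) * b := by
    have h01 : M 0 1 = M 0 0 * b0 + β₀ * (M 0 0 * d0) := by
      rw [hb0def, hx₀def, hd0def]; field_simp; ring
    rw [hzd] at e01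
    rw [hcan] at h01
    linear_combination h01 - e01
  have hβdiff : ‖β - β₀‖ ≤ 1 := by
    have hnum : ‖M 0 0 * b0 - (z : ℚ_[p]) * b‖ ≤ (p : ℝ) ^ (-v0) := by
      rw [sub_eq_add_neg]
      refine le_trans (IsUltrametricDist.norm_add_le_max _ _) (max_le ?_ ?_)
      · rw [norm_mul, hn0]
        exact mul_le_of_le_one_right (le_of_lt (zpow_pos hpR0 _)) hb0
      · rw [norm_neg, norm_mul, hznorm]
        exact mul_le_of_le_one_right (le_of_lt (zpow_pos hpR0 _)) hnormb
    have hden : ‖M 1 1 / (p : ℚ_[p]) ^ δ₀‖ = (p : ℝ) ^ (-v0) := by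
      rw [norm_div, Padic.norm_p_zpow, hn1, ← zpow_sub₀ hpRne,
        show -v1 - -δ₀ = -v0 by omega]
    have hkey : ‖β - β₀‖ * (p : ℝ) ^ (-v0) ≤ 1 * (p : ℝ) ^ (-v0) := by
      rw [one_mul, ← hden, ← norm_mul, hsub, hden]
      exact hnum
    exact le_of_mul_le_mul_right hkey (zpow_pos hpR0 _)
  have hβeq : β = β₀ := rep_unique hβ hβ₀mem hβdiff
  subst hβeq
  have hgu : IsUnit (!![1, β; 0, (p : ℚ_[p]) ^ δ₀] : Matrix (Fin 2) (Fin 2) ℚ_[p]) := by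
    rw [Matrix.isUnit_iff_isUnit_det, Matrix.det_fin_two_of]
    exact isUnit_iff_ne_zero.mpr (by simpa using hpz)
  have hkeq : k₀ = !![(z : ℚ_[p]) * ((a : ℤ_[p]) : ℚ_[p]), (z : ℚ_[p]) * ((b : ℤ_[p]) : ℚ_[p]);
      0, (z : ℚ_[p]) * ((d : ℤ_[p]) : ℚ_[p])] :=
    hgu.mul_left_cancel (hM₀.symm.trans hMeq)
  rw [hkeq]
end

section
/- Let Π be a representation of B over E and let τ_k = [[1, -p^{-k}],[0,1]]. If v ≠ 0 is fixed by the subgroup [[1, Z_p],[0,1]] and k ≥ 0, then at least one of the p^k vectors v_ℓ = Σ_{j=0}^{p^k-1} C(j,ℓ)·τ_k^j(v) (0 ≤ ℓ ≤ p^k - 1) is nonzero and fixed by τ_k. -/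
open Matrix

/-- The Borel subgroup `B` of upper triangular matrices in `GL_2(Q_p)`. -/
def BorelGL2 (p : ℕ) [Fact p.Prime] : Subgroup (GL (Fin 2) ℚ_[p]) where
  carrier := {g | (g : Matrix (Fin 2) (Fin 2) ℚ_[p]) 1 0 = 0}
  one_mem' := by simp [Matrix.one_apply]
  mul_mem' := by
    intro a b ha hb
    simp only [Set.mem_setOf_eq] at ha hb ⊢
    show ((a : Matrix (Fin 2) (Fin 2) ℚ_[p]) * b) 1 0 = 0
    rw [Matrix.mul_apply, Fin.sum_univ_two, ha, hb]
    ring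
  inv_mem' := by
    intro a ha
    simp only [Set.mem_setOf_eq] at ha ⊢
    rw [Matrix.coe_units_inv a, Matrix.inv_def, Matrix.adjugate_fin_two]
    simp [ha]

/-- The upper triangular element `[[a, b],[0, d]]` of the Borel subgroup. -/
noncomputable def mkB (p : ℕ) [Fact p.Prime] (a d : ℚ_[p]ˣ) (b : ℚ_[p]) : BorelGL2 p :=
  ⟨Matrix.GeneralLinearGroup.mkOfDetNeZero !![(a : ℚ_[p]), b; 0, (d : ℚ_[p])]
      (by rw [Matrix.det_fin_two_of]; simp [mul_ne_zero a.ne_zero d.ne_zero]),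
    by show (!![(a : ℚ_[p]), b; 0, (d : ℚ_[p])] : Matrix (Fin 2) (Fin 2) ℚ_[p]) 1 0 = 0; simp⟩

lemma mkB_mul (p : ℕ) [Fact p.Prime] (b c : ℚ_[p]) :
    mkB p 1 1 b * mkB p 1 1 c = mkB p 1 1 (b + c) := by
  apply Subtype.ext
  apply Units.ext
  rw [Subgroup.coe_mul, Units.val_mul]
  show (!![(1:ℚ_[p]), b; 0, 1] * !![(1:ℚ_[p]), c; 0, 1]) = !![(1:ℚ_[p]), b+c; 0, 1]
  rw [Matrix.mul_fin_two]
  norm_num [add_comm]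

lemma mkB_pow (p : ℕ) [Fact p.Prime] (b : ℚ_[p]) (n : ℕ) :
    (mkB p 1 1 b) ^ n = mkB p 1 1 (n • b) := by
  induction n with
  | zero =>
    apply Subtype.ext; apply Units.ext
    show (1 : Matrix (Fin 2) (Fin 2) ℚ_[p]) = !![(1:ℚ_[p]), (0:ℕ)•b; 0, 1]
    rw [Matrix.one_fin_two]
    norm_num
  | succ n ih =>
    rw [pow_succ, ih, mkB_mul, succ_nsmul]


/-- Let `Π` be an `E`-linear representation `ρ` of the Borel `B` of `GL_2(Q_p)`
(`E` of characteristic `p`) and `τ_k = [[1, -p^{-k}],[0,1]]`. If `v ≠ 0` is fixed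
by the subgroup `[[1, Z_p],[0,1]]` and `k ≥ 0`, then at least one of the `p^k`
vectors `v_ℓ = Σ_{j=0}^{p^k-1} C(j,ℓ)·τ_k^j(v)`, `0 ≤ ℓ ≤ p^k - 1`, is nonzero
and fixed by `τ_k`. -/
theorem exists_nonzero_tau_fixed (p : ℕ) [Fact p.Prime]
    (E : Type*) [Field E] [CharP E p]
    (V : Type*) [AddCommGroup V] [Module E V]
    (ρ : Representation E (BorelGL2 p) V) (k : ℕ) (v : V) (hv : v ≠ 0)
    (hfix : ∀ t : ℚ_[p], ‖t‖ ≤ 1 → ρ (mkB p 1 1 t) v = v) :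
    ∃ ℓ < p ^ k,
      (∑ j ∈ Finset.range (p ^ k),
          ((j.choose ℓ : E)) • ρ ((mkB p 1 1 (-(p : ℚ_[p]) ^ (-(k : ℤ)))) ^ j) v) ≠ 0 ∧
      ρ (mkB p 1 1 (-(p : ℚ_[p]) ^ (-(k : ℤ))))
          (∑ j ∈ Finset.range (p ^ k),
            ((j.choose ℓ : E)) • ρ ((mkB p 1 1 (-(p : ℚ_[p]) ^ (-(k : ℤ)))) ^ j) v)
        = ∑ j ∈ Finset.range (p ^ k),
            ((j.choose ℓ : E)) • ρ ((mkB p 1 1 (-(p : ℚ_[p]) ^ (-(k : ℤ)))) ^ j) v := by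
  classical
  have hp := (Fact.out : p.Prime)
  set N := p ^ k with hN
  have hN0 : 0 < N := pow_pos hp.pos k
  set τ : BorelGL2 p := mkB p 1 1 (-(p : ℚ_[p]) ^ (-(k : ℤ))) with hτ
  set T : V →ₗ[E] V := ρ τ with hT
  -- τ ^ N = mkB p 1 1 (-1)
  have hτN : τ ^ N = mkB p 1 1 (-1) := by
    rw [hτ, mkB_pow]
    congr 1
    have hpne : ((p : ℚ_[p]) : ℚ_[p]) ≠ 0 := by
      exact_mod_cast (Nat.cast_ne_zero (R := ℚ_[p])).2 hp.ne_zero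
    rw [nsmul_eq_mul, hN]
    push_cast
    rw [mul_neg, ← zpow_natCast ((p : ℚ_[p])) k, ← zpow_add₀ hpne]
    norm_num
  -- T ^ N v = v
  have hTN : (T ^ N) v = v := by
    rw [hT, ← map_pow, hτN]
    exact hfix (-1) (by simp)
  -- definitions
  set f : ℕ → V := fun ℓ => ∑ j ∈ Finset.range N, ((j.choose ℓ : E)) • (T ^ j) v with hf
  -- the sums in the statement equal f
  have hsum : ∀ ℓ, (∑ j ∈ Finset.range N, ((j.choose ℓ : E)) • ρ (τ ^ j) v) = f ℓ := by
    intro ℓ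
    simp only [hf, map_pow]
    rfl
  -- f (N-1) ≠ 0
  have hfN1 : f (N - 1) ≠ 0 := by
    have : f (N - 1) = (T ^ (N - 1)) v := by
      simp only [hf]
      rw [Finset.sum_eq_single (N - 1)]
      · simp
      · intro j hj hne
        rw [Finset.mem_range] at hj
        have : j < N - 1 := by omega
        rw [Nat.choose_eq_zero_of_lt this]
        simp
      · intro h
        exact absurd (Finset.mem_range.2 (by omega)) h
    rw [this]
    intro h0
    apply hv
    have := congrArg (ρ (τ⁻¹ ^ (N - 1))) h0
    rw [map_zero] at this
    rw [← this, hT, ← map_pow, ← Module.End.mul_apply, ← _root_.map_mul, inv_pow,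
      inv_mul_cancel, _root_.map_one, Module.End.one_apply]
  -- shift computation
  have hshift : ∀ ℓ, T (f ℓ) = ∑ j ∈ Finset.range N, ((j.choose ℓ : E)) • (T ^ (j+1)) v := by
    intro ℓ
    simp only [hf, map_sum, LinearMap.map_smul]
    refine Finset.sum_congr rfl fun j _ => ?_
    rw [pow_succ', Module.End.mul_apply]
  have hshift2 : ∀ g : ℕ → V, (∑ j ∈ Finset.range N, g (j+1))
      = (∑ j ∈ Finset.range N, g j) + g N - g 0 := by
    intro g
    have h1 : ∑ j ∈ Finset.range (N+1), g j = (∑ j ∈ Finset.range N, g (j+1)) + g 0 :=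
      Finset.sum_range_succ' g N
    have h2 : ∑ j ∈ Finset.range (N+1), g j = (∑ j ∈ Finset.range N, g j) + g N :=
      Finset.sum_range_succ g N
    rw [h2] at h1
    rw [h1]
    abel
  -- key recursion, base
  have hkey0 : T (f 0) = f 0 := by
    rw [hshift 0]
    simp only [Nat.choose_zero_right, Nat.cast_one, one_smul]
    rw [hshift2 (fun j => (T ^ j) v), hTN]
    simp only [hf, Nat.choose_zero_right, Nat.cast_one, one_smul, pow_zero,
      Module.End.one_apply]
    abel
  -- key recursion, step
  have hkeyS : ∀ m, m + 1 < N → T (f (m+1)) + T (f m) = f (m+1) := by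
    intro m hm
    rw [hshift (m+1), hshift m, ← Finset.sum_add_distrib]
    have : ∀ j, ((j.choose (m+1) : E)) • (T ^ (j+1)) v + ((j.choose m : E)) • (T ^ (j+1)) v
        = (((j+1).choose (m+1) : E)) • (T ^ (j+1)) v := by
      intro j
      rw [← add_smul]
      congr 1
      rw [Nat.choose_succ_succ]
      push_cast
      ring
    simp only [this]
    rw [hshift2 (fun j => (((j).choose (m+1) : E)) • (T ^ j) v)]
    have hc1 : ((N.choose (m+1) : E)) = 0 := by
      rw [hN]
      have : p ∣ (p ^ k).choose (m+1) :=
        Nat.Prime.dvd_choose_pow hp (Nat.succ_ne_zero m) (Nat.ne_of_lt (hN ▸ hm))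
      exact_mod_cast (CharP.cast_eq_zero_iff E p _).2 (Nat.cast_dvd_cast this)
    have hc0 : (((0:ℕ).choose (m+1) : E)) = 0 := by
      rw [Nat.choose_eq_zero_of_lt (Nat.succ_pos m)]
      simp
    rw [hc1, hc0]
    simp only [zero_smul, sub_zero, add_zero, hf]
  -- choose minimal ℓ with f ℓ ≠ 0
  have hex : ∃ ℓ, f ℓ ≠ 0 := ⟨N - 1, hfN1⟩
  set ℓ0 := Nat.find hex with hℓ0
  have hℓ0N : ℓ0 < N := lt_of_le_of_lt (Nat.find_min' hex hfN1) (by omega)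
  have hne : f ℓ0 ≠ 0 := Nat.find_spec hex
  have hfixℓ : T (f ℓ0) = f ℓ0 := by
    cases hc : ℓ0 with
    | zero => exact hkey0
    | succ m =>
      have hm0 : f m = 0 := by
        by_contra hmne
        have hle : ℓ0 ≤ m := Nat.find_le hmne
        omega
      have := hkeyS m (hc ▸ hℓ0N)
      rw [hm0, map_zero, add_zero] at this
      exact this
  exact ⟨ℓ0, hℓ0N, by rw [hsum ℓ0]; exact hne, by rw [hsum ℓ0]; exact hfixℓ⟩
end

section
/- For an integer 1 ≤ h ≤ p^n - 2, the following are equivalent: (a) there is no proper divisor d of n such that (p^n-1)/(p^d-1) divides h; (b) writing h = e_{n-1}⋯e_1e_0 in base p, the map i ↦ e_i from Z/nZ to {0,…,p-1} has no period strictly smaller than n. -/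
open Finset

private lemma digit_zero {p : ℕ} (hp : 2 ≤ p) {b : ℕ} (H : ∀ i, b / p ^ i % p = 0) : b = 0 := by
  by_contra hb
  have hb0 : 0 < b := Nat.pos_of_ne_zero hb
  set i := Nat.log p b with hi
  have hle : p ^ i ≤ b := Nat.pow_log_le_self p hb
  have hlt : b < p ^ (i + 1) := Nat.lt_pow_succ_log_self (by omega) b
  have h3 : 1 ≤ b / p ^ i := (Nat.one_le_div_iff (pow_pos (by omega) _)).mpr hle
  have h4 : b / p ^ i < p := by
    rw [Nat.div_lt_iff_lt_mul (pow_pos (by omega) _)]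
    calc b < p ^ (i + 1) := hlt
    _ = p * p ^ i := by rw [pow_succ']
  have := H i
  rw [Nat.mod_eq_of_lt h4] at this
  omega

private lemma digits_ext {p : ℕ} (hp : 2 ≤ p) :
    ∀ a b : ℕ, (∀ i, a / p ^ i % p = b / p ^ i % p) → a = b := by
  intro a
  induction a using Nat.strong_induction_on with
  | _ a ih =>
    intro b H
    rcases Nat.eq_zero_or_pos a with ha | ha
    · subst ha
      refine (digit_zero hp fun i => ?_).symm
      have := (H i).symm
      simpa using this
    · have H' : ∀ i, (a / p) / p ^ i % p = (b / p) / p ^ i % p := by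
        intro i
        rw [Nat.div_div_eq_div_mul, Nat.div_div_eq_div_mul, ← pow_succ']
        exact H (i + 1)
      have hdiv := ih (a / p) (Nat.div_lt_self ha (by omega)) (b / p) H'
      have h0 := H 0
      simp only [pow_zero, Nat.div_one] at h0
      have e1 := Nat.div_add_mod a p
      have e2 := Nat.div_add_mod b p
      rw [hdiv] at e1
      omega

private lemma geom_mul {q : ℕ} (hq : 1 ≤ q) (m : ℕ) :
    (q - 1) * ∑ j ∈ range m, q ^ j = q ^ m - 1 := by
  induction m with
  | zero => simp
  | succ m ih =>
    rw [sum_range_succ, Nat.mul_add, ih]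
    have e1 : (q - 1) * q ^ m = q ^ (m + 1) - q ^ m := by
      rw [Nat.sub_mul, one_mul, ← pow_succ']
    have h1 : 1 ≤ q ^ m := Nat.one_le_pow _ _ (by omega)
    have h2 : q ^ m ≤ q ^ (m + 1) := Nat.pow_le_pow_right (by omega) (by omega)
    omega

private lemma formula_to_P {q : ℕ} (hq : 2 ≤ q) (m : ℕ) {h : ℕ}
    (hf : h = h % q * ∑ j ∈ range (m + 1), q ^ j) :
    h / q = h % q ^ m := by
  set r := h % q with hr
  have hrq : r < q := Nat.mod_lt _ (by omega)
  set T := ∑ j ∈ range m, q ^ j with hT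
  have h1 : h = q * (r * T) + r := by rw [hf, geom_sum_succ]; ring
  have hdiv : h / q = r * T := by
    rw [h1, Nat.mul_add_div (by omega), Nat.div_eq_of_lt hrq]; omega
  have h2 : h = r * T + r * q ^ m := by rw [hf, geom_sum_succ']; ring
  have hgm := geom_mul (by omega : 1 ≤ q) m
  rw [← hT] at hgm
  have h3 : r * T ≤ (q - 1) * T := Nat.mul_le_mul_right _ (by omega)
  have h4 : 1 ≤ q ^ m := Nat.one_le_pow _ _ (by omega)
  have hrT : r * T < q ^ m := by omega
  have hmod : h % q ^ m = r * T := by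
    rw [h2, Nat.add_mul_mod_self_right, Nat.mod_eq_of_lt hrT]
  rw [hdiv, hmod]

private lemma P_to_formula {q : ℕ} (hq : 2 ≤ q) :
    ∀ m, ∀ h : ℕ, h / q = h % q ^ m → h = h % q * ∑ j ∈ range (m + 1), q ^ j := by
  intro m
  induction m with
  | zero =>
    intro h hP
    simp only [pow_zero, Nat.mod_one] at hP
    have hdm := Nat.div_add_mod h q
    rw [hP, Nat.mul_zero] at hdm
    have hs : (∑ j ∈ range (0 + 1), q ^ j) = 1 := by simp
    rw [hs, Nat.mul_one]
    omega
  | succ m ih =>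
    intro h hP
    have ha : h / q / q = h / q % q ^ m := by
      conv_lhs => rw [hP]
      rw [pow_succ', Nat.mod_mul_right_div_self]
    have ihh := ih (h / q) ha
    have hq1 : h / q % q = h % q := by
      rw [hP, Nat.mod_mod_of_dvd _ (dvd_pow_self q (Nat.succ_ne_zero m))]
    calc h = q * (h / q) + h % q := (Nat.div_add_mod h q).symm
    _ = q * (h % q * ∑ j ∈ range (m + 1), q ^ j) + h % q := by rw [ihh, hq1]
    _ = h % q * ∑ j ∈ range (m + 1 + 1), q ^ j := by
        rw [show (∑ j ∈ range (m + 1 + 1), q ^ j) = q * ∑ j ∈ range (m + 1), q ^ j + 1 from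
          geom_sum_succ]
        ring

private lemma dig_mod {p : ℕ} (hp : 2 ≤ p) (h i k : ℕ) (hik : i < k) :
    h % p ^ k / p ^ i % p = h / p ^ i % p := by
  have h1 : h % p ^ k / p ^ i = h / p ^ i % p ^ (k - i) := by
    conv_lhs => rw [show p ^ k = p ^ i * p ^ (k - i) by rw [← pow_add]; congr 1; omega]
    rw [Nat.mod_mul_right_div_self]
  rw [h1, Nat.mod_mod_of_dvd _ (dvd_pow_self p (by omega : k - i ≠ 0))]

private lemma lin_iff {p n d h : ℕ} (hp : 2 ≤ p) (hh : h < p ^ n) (hdn : d ≤ n) :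
    (∀ i, i + d < n → h / p ^ (i + d) % p = h / p ^ i % p) ↔ h / p ^ d = h % p ^ (n - d) := by
  constructor
  · intro lin
    apply digits_ext hp
    intro i
    by_cases hi : i < n - d
    · rw [Nat.div_div_eq_div_mul, ← pow_add, dig_mod hp h i (n - d) hi,
        show d + i = i + d from by ring]
      exact lin i (by omega)
    · have e1 : h / p ^ d / p ^ i = 0 := by
        rw [Nat.div_div_eq_div_mul, ← pow_add]
        exact Nat.div_eq_of_lt (lt_of_lt_of_le hh (Nat.pow_le_pow_right (by omega) (by omega)))
      have e2 : h % p ^ (n - d) / p ^ i = 0 :=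
        Nat.div_eq_of_lt (lt_of_lt_of_le (Nat.mod_lt _ (pow_pos (by omega) _))
          (Nat.pow_le_pow_right (by omega) (by omega)))
      rw [e1, e2]
  · intro heq i hi
    have e : h / p ^ (i + d) % p = h / p ^ d / p ^ i % p := by
      rw [Nat.div_div_eq_div_mul, ← pow_add, add_comm d i]
    rw [e, heq, dig_mod hp h i (n - d) (by omega)]

private lemma cyc_of_lin {p n d h : ℕ} (hn : 0 < n) (hd : 0 < d) (hdn : d ∣ n)
    (lin : ∀ i, i + d < n → h / p ^ (i + d) % p = h / p ^ i % p) :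
    ∀ i < n, h / p ^ ((i + d) % n) % p = h / p ^ i % p := by
  have emod : ∀ j, j < n → h / p ^ j % p = h / p ^ (j % d) % p := by
    intro j
    induction j using Nat.strong_induction_on with
    | _ j ih =>
      intro hj
      rcases lt_or_ge j d with hjd | hjd
      · rw [Nat.mod_eq_of_lt hjd]
      · have h1 : j - d + d = j := by omega
        have h2 := lin (j - d) (by omega)
        rw [h1] at h2
        have h3 : (j - d) % d = j % d := by
          conv_rhs => rw [← h1]
          rw [Nat.add_mod_right]
        rw [h2, ih (j - d) (by omega) (by omega), h3]
  intro i hi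
  rw [emod _ (Nat.mod_lt _ hn), emod i hi, Nat.mod_mod_of_dvd _ hdn, Nat.add_mod_right]

private lemma cyc_iter {p n d h : ℕ} (hn : 0 < n)
    (cyc : ∀ i < n, h / p ^ ((i + d) % n) % p = h / p ^ i % p) :
    ∀ k, ∀ i < n, h / p ^ ((i + k * d) % n) % p = h / p ^ i % p := by
  intro k
  induction k with
  | zero => intro i hi; simp [Nat.mod_eq_of_lt hi]
  | succ k ih =>
    intro i hi
    have h1 : (i + (k + 1) * d) % n = ((i + k * d) % n + d) % n := by
      rw [Nat.mod_add_mod]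
      congr 1
      ring
    rw [h1, cyc _ (Nat.mod_lt _ hn), ih i hi]

private lemma gcd_period {p n d h : ℕ} (hn : 0 < n) (hd : 0 < d) (hdn : d < n)
    (cyc : ∀ i < n, h / p ^ ((i + d) % n) % p = h / p ^ i % p) :
    ∀ i < n, h / p ^ ((i + Nat.gcd d n) % n) % p = h / p ^ i % p := by
  set g := Nat.gcd d n with hg
  have hg0 : 0 < g := Nat.gcd_pos_of_pos_left _ hd
  have hgd : g ∣ d := Nat.gcd_dvd_left _ _
  have hgn : g ∣ n := Nat.gcd_dvd_right _ _
  have hgltn : g < n := lt_of_le_of_lt (Nat.le_of_dvd hd hgd) hdn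
  have hco : Nat.Coprime (d / g) (n / g) := Nat.coprime_div_gcd_div_gcd hg0
  have h2 : 1 < n / g := by
    obtain ⟨c, hc⟩ := hgn
    have hcg : n / g = c := by rw [hc, Nat.mul_div_cancel_left _ hg0]
    rw [hcg]
    by_contra hcon
    interval_cases c <;> omega
  obtain ⟨k, -, hk⟩ := Nat.exists_mul_mod_eq_one_of_coprime hco h2
  have hkd : (k * d) % n = g := by
    have e1 : k * d = g * (d / g * k) := by
      rw [← Nat.mul_assoc, Nat.mul_div_cancel' hgd, Nat.mul_comm]
    have e2 : n = g * (n / g) := (Nat.mul_div_cancel' hgn).symm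
    rw [e1]
    conv_lhs => rw [e2]
    rw [Nat.mul_mod_mul_left, hk, Nat.mul_one]
  intro i hi
  have := cyc_iter hn cyc k i hi
  have e3 : (i + k * d) % n = (i + g) % n := by
    conv_rhs => rw [← hkd]
    rw [Nat.add_mod_mod]
  rwa [e3] at this

private lemma two_le_pow {p d : ℕ} (hp : 2 ≤ p) (hd0 : 0 < d) : 2 ≤ p ^ d := by
  calc 2 ≤ p := hp
  _ = p ^ 1 := (pow_one p).symm
  _ ≤ p ^ d := Nat.pow_le_pow_right (by omega) hd0

private lemma two_le_div {g n : ℕ} (hg0 : 0 < g) (hglt : g < n) (hgd : g ∣ n) : 2 ≤ n / g := by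
  obtain ⟨c, hc⟩ := hgd
  have hcg : n / g = c := by rw [hc, Nat.mul_div_cancel_left _ hg0]
  rw [hcg]
  by_contra hcon
  push_neg at hcon
  interval_cases c <;> omega

private lemma S_eq {p d n : ℕ} (hp : 2 ≤ p) (hd0 : 0 < d) (hdvd : d ∣ n) :
    (p ^ n - 1) / (p ^ d - 1) = ∑ j ∈ range (n / d), (p ^ d) ^ j := by
  have hq2 : 2 ≤ p ^ d := two_le_pow hp hd0
  have hmd : d * (n / d) = n := Nat.mul_div_cancel' hdvd
  have hgm := geom_mul (by omega : 1 ≤ p ^ d) (n / d)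
  apply Nat.div_eq_of_eq_mul_left (by omega : 0 < p ^ d - 1)
  rw [Nat.mul_comm, hgm, ← pow_mul, hmd]

private lemma pow_sub_eq {p d n : ℕ} (hdvd : d ∣ n) (hdlt : d < n) :
    p ^ (n - d) = (p ^ d) ^ (n / d - 1) := by
  rw [← pow_mul]
  congr 1
  have hmd : d * (n / d) = n := Nat.mul_div_cancel' hdvd
  have h1 : d * (n / d - 1) = d * (n / d) - d * 1 := by rw [Nat.mul_sub]
  omega

/-- For `1 ≤ h ≤ p^n - 2`, the following are equivalent: (a) there is no proper
divisor `d` of `n` such that `(p^n-1)/(p^d-1)` divides `h`; (b) writing `h` in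
base `p`, the map `i ↦ e_i` (the `i`-th digit, viewed on `Z/nZ`) has no period
strictly smaller than `n`. -/
theorem primitive_iff_digits_aperiodic (p n h : ℕ) [Fact p.Prime] (hn : 1 ≤ n)
    (h1 : 1 ≤ h) (h2 : h ≤ p ^ n - 2) :
    (¬ ∃ d, d ∣ n ∧ d < n ∧ ((p ^ n - 1) / (p ^ d - 1)) ∣ h) ↔
    (¬ ∃ d, 0 < d ∧ d < n ∧ ∀ i < n, h / p ^ ((i + d) % n) % p = h / p ^ i % p) := by
  have hp : 2 ≤ p := (Fact.out : p.Prime).two_le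
  have hn0 : 0 < n := hn
  have hpn2 : 2 ≤ p ^ n := two_le_pow hp hn0
  have hh : h < p ^ n := by omega
  apply not_congr
  constructor
  · rintro ⟨d, hdvd, hdlt, hS⟩
    have hd0 : 0 < d := by
      rcases Nat.eq_zero_or_pos d with rfl | hpos
      · obtain rfl : n = 0 := Nat.eq_zero_of_zero_dvd hdvd
        omega
      · exact hpos
    refine ⟨d, hd0, hdlt, ?_⟩
    set m := n / d with hm
    have hmd : d * m = n := Nat.mul_div_cancel' hdvd
    have hm2 : 2 ≤ m := two_le_div hd0 hdlt hdvd
    set q := p ^ d with hq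
    have hq2 : 2 ≤ q := two_le_pow hp hd0
    have hqm : q ^ m = p ^ n := by rw [hq, ← pow_mul, hmd]
    have hqm2 : 2 ≤ q ^ m := by omega
    have hgm := geom_mul (by omega : 1 ≤ q) m
    have hSeq : (p ^ n - 1) / (q - 1) = ∑ j ∈ range m, q ^ j := S_eq hp hd0 hdvd
    rw [hSeq] at hS
    set G := ∑ j ∈ range m, q ^ j with hG
    have hk : G * (h / G) = h := Nat.mul_div_cancel' hS
    set k := h / G with hkdef
    have hklt : k < q - 1 := by
      by_contra hcon
      push_neg at hcon
      have h5 : (q - 1) * G ≤ k * G := Nat.mul_le_mul_right _ hcon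
      rw [hgm, Nat.mul_comm k G, hk] at h5
      omega
    have hGsucc : G = q * (∑ j ∈ range (m - 1), q ^ j) + 1 := by
      conv_lhs => rw [hG, show m = (m - 1) + 1 from by omega]
      rw [geom_sum_succ]
    have hhq : h = q * ((∑ j ∈ range (m - 1), q ^ j) * k) + k := by
      rw [← hk, hGsucc]; ring
    have hmod : h % q = k := by
      rw [hhq, Nat.mul_add_mod, Nat.mod_eq_of_lt (by omega)]
    have hf : h = h % q * ∑ j ∈ range ((m - 1) + 1), q ^ j := by
      rw [show (m - 1) + 1 = m from by omega, hmod, ← hG, Nat.mul_comm, hk]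
    have hP := formula_to_P hq2 (m - 1) hf
    rw [show q ^ (m - 1) = p ^ (n - d) from by rw [hq, ← pow_sub_eq hdvd hdlt]] at hP
    have lin := (lin_iff hp hh (le_of_lt hdlt)).mpr hP
    exact cyc_of_lin hn0 hd0 hdvd lin
  · rintro ⟨d, hd0, hdlt, cyc⟩
    set g := Nat.gcd d n with hg
    have hgdvd : g ∣ n := Nat.gcd_dvd_right _ _
    have hg0 : 0 < g := Nat.gcd_pos_of_pos_left _ hd0
    have hglt : g < n := lt_of_le_of_lt (Nat.le_of_dvd hd0 (Nat.gcd_dvd_left _ _)) hdlt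
    have cycg := gcd_period hn0 hd0 hdlt cyc
    refine ⟨g, hgdvd, hglt, ?_⟩
    have lin : ∀ i, i + g < n → h / p ^ (i + g) % p = h / p ^ i % p := by
      intro i hig
      have := cycg i (by omega)
      rwa [Nat.mod_eq_of_lt hig] at this
    have hP := (lin_iff hp hh (le_of_lt hglt)).mp lin
    set m := n / g with hm
    have hm2 : 2 ≤ m := two_le_div hg0 hglt hgdvd
    set q := p ^ g with hq
    have hq2 : 2 ≤ q := two_le_pow hp hg0
    rw [show p ^ (n - g) = q ^ (m - 1) from by rw [hq, pow_sub_eq hgdvd hglt]] at hP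
    have hf := P_to_formula hq2 (m - 1) h hP
    rw [show (m - 1) + 1 = m from by omega] at hf
    rw [S_eq hp hg0 hgdvd]
    exact ⟨h % q, by rw [Nat.mul_comm]; exact hf⟩
end

section
/- Let X = lim← X_i be a profinite E-linear representation of a topological group G that is topologically irreducible (no closed G-invariant subspace other than 0 and X). Then the smooth dual X* (continuous linear forms with contragredient action) is an irreducible representation of G; the proof uses that (X*)* is naturally isomorphic to X. -/
/-- Let `X` be a profinite `E`-linear representation of a topological group `G`
(`E` a finite, discrete field; `X` compact, Hausdorff, totally disconnected
topological `E`-vector space with continuous linear `G`-action `ρ`, acting by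
topological automorphisms). If `X` is topologically irreducible (its only closed
`G`-invariant subspaces are `0` and `X`), then the dual `X*` of continuous
linear forms, with the contragredient action `(g · f)(x) = f(g⁻¹ x)`, is an
irreducible representation of `G`. -/
theorem dual_of_topologically_irreducible_is_irreducible
    (E : Type*) [Field E] [Fintype E] [TopologicalSpace E] [DiscreteTopology E]
    (G : Type*) [Group G] [TopologicalSpace G] [IsTopologicalGroup G]
    (X : Type*) [AddCommGroup X] [Module E X] [TopologicalSpace X]
    [IsTopologicalAddGroup X] [ContinuousSMul E X]
    [CompactSpace X] [T2Space X] [TotallyDisconnectedSpace X] [Nontrivial X]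
    (ρ : G →* (X →L[E] X)ˣ)
    (hcont : Continuous fun gx : G × X => (ρ gx.1 : X →L[E] X) gx.2)
    (hirr : ∀ W : Submodule E X, IsClosed (W : Set X) →
      (∀ g : G, ∀ x ∈ W, (ρ g : X →L[E] X) x ∈ W) → W = ⊥ ∨ W = ⊤) :
    ∀ Λ : Submodule E (X →L[E] E),
      (∀ g : G, ∀ f ∈ Λ, f.comp ((ρ g⁻¹ : X →L[E] X)) ∈ Λ) → Λ = ⊥ ∨ Λ = ⊤ := by
  intro Λ hΛ
  classical
  -- the common kernel of all functionals in Λ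
  set W : Submodule E X := ⨅ f ∈ Λ, LinearMap.ker (f : X →ₗ[E] E) with hWdef
  have hmemW : ∀ x, x ∈ W ↔ ∀ f ∈ Λ, f x = 0 := by
    intro x
    simp [hWdef, Submodule.mem_iInf, LinearMap.mem_ker]
  have hclosed : IsClosed (W : Set X) := by
    have : (W : Set X) = ⋂ f ∈ Λ, (LinearMap.ker (f : X →ₗ[E] E) : Set X) := by
      ext x; simp [hmemW x, LinearMap.mem_ker]
    rw [this]
    exact isClosed_iInter fun f => isClosed_iInter fun _ =>
      ContinuousLinearMap.isClosed_ker f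
  have hinv : ∀ g : G, ∀ x ∈ W, (ρ g : X →L[E] X) x ∈ W := by
    intro g x hx
    rw [hmemW] at hx ⊢
    intro f hf
    have h1 : f.comp ((ρ (g⁻¹)⁻¹ : X →L[E] X)) ∈ Λ := hΛ g⁻¹ f hf
    rw [inv_inv] at h1
    simpa using hx _ h1
  rcases hirr W hclosed hinv with hW | hW
  · -- W = ⊥ : show Λ = ⊤
    right
    rw [eq_top_iff]
    intro f _
    -- the set where f does not vanish is compact
    have hopen : IsOpen ((f : X → E) ⁻¹' {0}) :=
      (isOpen_discrete ({0} : Set E)).preimage f.continuous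
    have hK : IsCompact (((f : X → E) ⁻¹' {0})ᶜ) :=
      hopen.isClosed_compl.isCompact
    -- open cover by non-vanishing sets of elements of Λ
    have hcover : (((f : X → E) ⁻¹' {0})ᶜ : Set X) ⊆
        ⋃ l : Λ, ((((l : X →L[E] E)) : X → E) ⁻¹' {0})ᶜ := by
      intro x hx
      have hxne : x ≠ 0 := by
        intro h; apply hx; simp [h]
      have hxW : x ∉ W := by
        rw [hW]; simpa using hxne
      rw [hmemW] at hxW
      push_neg at hxW
      obtain ⟨l, hl, hlx⟩ := hxW
      exact Set.mem_iUnion.2 ⟨⟨l, hl⟩, hlx⟩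
    obtain ⟨t, ht⟩ := hK.elim_finite_subcover
      (fun l : Λ => ((((l : X →L[E] E)) : X → E) ⁻¹' {0})ᶜ)
      (fun l => (ContinuousLinearMap.isClosed_ker _).isOpen_compl) hcover
    -- finitely many kernels suffice
    have hker : (⨅ l : t, LinearMap.ker (((l : Λ) : X →L[E] E) : X →ₗ[E] E)) ≤
        LinearMap.ker (f : X →ₗ[E] E) := by
      intro x hx
      simp only [Submodule.mem_iInf, LinearMap.mem_ker] at hx
      rw [LinearMap.mem_ker]
      by_contra hfx
      have hxK : x ∈ (((f : X → E) ⁻¹' {0})ᶜ : Set X) := by simpa using hfx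
      obtain ⟨l, hl⟩ := Set.mem_iUnion.1 (ht hxK)
      simp only [Set.mem_iUnion, Set.mem_compl_iff, Set.mem_preimage,
        Set.mem_singleton_iff] at hl
      obtain ⟨hlt, hlx⟩ := hl
      exact hlx (hx ⟨l, hlt⟩)
    haveI : Finite t := FinsetCoe.fintype t |>.finite
    have hspan : (f : X →ₗ[E] E) ∈ Submodule.span E
        (Set.range fun l : t => (((l : Λ) : X →L[E] E) : X →ₗ[E] E)) :=
      mem_span_of_iInf_ker_le_ker hker
    -- transport back to continuous linear maps
    have hsub : Submodule.span E
        (Set.range fun l : t => (((l : Λ) : X →L[E] E) : X →ₗ[E] E)) ≤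
        Λ.map (ContinuousLinearMap.coeLM E) := by
      rw [Submodule.span_le]
      rintro _ ⟨l, rfl⟩
      exact ⟨((l : Λ) : X →L[E] E), (l : Λ).2, rfl⟩
    obtain ⟨g, hg, hgf⟩ := hsub hspan
    have : g = f := by
      apply ContinuousLinearMap.coe_injective
      exact hgf
    rwa [this] at hg
  · -- W = ⊤ : all functionals in Λ vanish, so Λ = ⊥
    left
    rw [eq_bot_iff]
    intro f hf
    rw [Submodule.mem_bot]
    ext x
    have : x ∈ W := hW ▸ Submodule.mem_top
    rw [hmemW] at this
    simpa using this f hf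
end
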